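/- arXiv:2210.04374 — 3 statements merged into one kernel-verified Lean document; each statement's English description precedes it below -/
import Mathlib

section
/- Let X be a normed plane. The Fermat–Torricelli set ft(x₁, x₂, x₃) is a singleton for every triple of points x₁, x₂, x₃ ∈ X if and only if X satisfies none of the three non-uniqueness conditions: (1) there exist unit vectors x₁, x₂, x₃, each of the first type, and norming functionals φᵢ for xᵢ with φ₁ + φ₂ + φ₃ = 0; (2) there exist unit vectors x₁, x₂ of the first type and x₃ of the zero type, and norming functionals φᵢ for xᵢ with φ₁ + φ₂ + φ₃ = 0 such that x₃ is the only unit vector y with φ₃(y) = 1; (3) there exist a unit vector x₃ of the first type and unit vectors x₁, x₂ of the zero type with x₂ = −x₁, and norming functionals φᵢ for xᵢ with φ₁ + φ₂ + φ₃ = 0 such that for i = 1, 2, xᵢ is the only unit vector y with φᵢ(y) = 1. -/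
/-- The Fermat–Torricelli set of a finite tuple of points: the set of points minimizing
the sum of distances to the given points. -/
noncomputable def ftSet {X : Type*} [NormedAddCommGroup X] {n : ℕ} (x : Fin n → X) : Set X :=
  {p | ∀ q : X, ∑ i, ‖p - x i‖ ≤ ∑ i, ‖q - x i‖}

/-- A unit vector is of the first type if it is an interior point of a flattening of the
unit sphere: it lies in the open segment between two distinct unit vectors whose closed
segment is contained in the unit sphere. -/
def FirstType {X : Type*} [NormedAddCommGroup X] [NormedSpace ℝ X] (x : X) : Prop :=
  ‖x‖ = 1 ∧ ∃ u v : X, u ≠ v ∧ ‖u‖ = 1 ∧ ‖v‖ = 1 ∧ x ∈ openSegment ℝ u v ∧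
    ∀ z ∈ segment ℝ u v, ‖z‖ = 1

/-- A unit vector is of the zero type if it is not of the first type. -/
def ZeroType {X : Type*} [NormedAddCommGroup X] [NormedSpace ℝ X] (x : X) : Prop :=
  ‖x‖ = 1 ∧ ¬ FirstType x

/-- φ is a norming functional for x : ‖φ‖ = 1 and φ(x) = ‖x‖. -/
def IsNorming {X : Type*} [NormedAddCommGroup X] [NormedSpace ℝ X]
    (φ : X →L[ℝ] ℝ) (x : X) : Prop :=
  ‖φ‖ = 1 ∧ φ x = ‖x‖

/-- First non-uniqueness condition: a consistent triple of three first-type elements. -/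
def FirstCondition (X : Type*) [NormedAddCommGroup X] [NormedSpace ℝ X] : Prop :=
  ∃ (x₁ x₂ x₃ : X) (φ₁ φ₂ φ₃ : X →L[ℝ] ℝ),
    FirstType x₁ ∧ FirstType x₂ ∧ FirstType x₃ ∧
    IsNorming φ₁ x₁ ∧ IsNorming φ₂ x₂ ∧ IsNorming φ₃ x₃ ∧ φ₁ + φ₂ + φ₃ = 0

/-- Second non-uniqueness condition: a consistent triple of two first-type elements and
one zero-type element whose support line meets the unit circle only at that element. -/
def SecondCondition (X : Type*) [NormedAddCommGroup X] [NormedSpace ℝ X] : Prop :=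
  ∃ (x₁ x₂ x₃ : X) (φ₁ φ₂ φ₃ : X →L[ℝ] ℝ),
    FirstType x₁ ∧ FirstType x₂ ∧ ZeroType x₃ ∧
    IsNorming φ₁ x₁ ∧ IsNorming φ₂ x₂ ∧ IsNorming φ₃ x₃ ∧ φ₁ + φ₂ + φ₃ = 0 ∧
    (∀ y : X, ‖y‖ = 1 → φ₃ y = 1 → y = x₃)

/-- Third non-uniqueness condition: a consistent triple of one first-type element and two
antipodal zero-type elements whose support lines meet the unit circle only at those
elements. -/
def ThirdCondition (X : Type*) [NormedAddCommGroup X] [NormedSpace ℝ X] : Prop :=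
  ∃ (x₁ x₂ x₃ : X) (φ₁ φ₂ φ₃ : X →L[ℝ] ℝ),
    ZeroType x₁ ∧ ZeroType x₂ ∧ x₂ = -x₁ ∧ FirstType x₃ ∧
    IsNorming φ₁ x₁ ∧ IsNorming φ₂ x₂ ∧ IsNorming φ₃ x₃ ∧ φ₁ + φ₂ + φ₃ = 0 ∧
    (∀ y : X, ‖y‖ = 1 → φ₁ y = 1 → y = x₁) ∧
    (∀ y : X, ‖y‖ = 1 → φ₂ y = 1 → y = x₂)

set_option linter.unusedVariables false
set_option linter.unusedSectionVars false
set_option maxHeartbeats 1000000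

section AuxiliaryLemmas
open Module

variable {X : Type*} [NormedAddCommGroup X] [NormedSpace ℝ X]



lemma seg_aux {u v : X} (hu : ‖u‖ = 1) {a b : ℝ}
    (ha : 0 < a) (hb : 0 < b) (hab : a + b = 1) (h1 : ‖a • u + b • v‖ = 1)
    {θ μ : ℝ} (hθ : 0 ≤ θ) (hμ : 0 ≤ μ) (hθμ : θ + μ = 1) (hv : ‖v‖ = 1)
    (hle : θ ≤ a) : ‖θ • u + μ • v‖ = 1 := by
  have hθ1 : θ < 1 := lt_of_le_of_lt hle (by linarith)
  set z := θ • u + μ • v with hz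
  have hzle : ‖z‖ ≤ 1 := by
    calc ‖z‖ ≤ ‖θ • u‖ + ‖μ • v‖ := norm_add_le _ _
    _ = θ * ‖u‖ + μ * ‖v‖ := by
        rw [norm_smul, norm_smul, Real.norm_of_nonneg hθ, Real.norm_of_nonneg hμ]
    _ = 1 := by rw [hu, hv]; linarith
  set c := (a - θ) / (1 - θ) with hc
  have hne : (1:ℝ) - θ ≠ 0 := by linarith
  have hc0 : 0 ≤ c := div_nonneg (by linarith) (by linarith)
  have hc1 : c < 1 := by
    rw [hc, div_lt_one (by linarith)]; linarith
  have hca : c + (1-c)*θ = a := by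
    have h : c * (1 - θ) = a - θ := by rw [hc]; exact div_mul_cancel₀ (a - θ) hne
    linear_combination h
  have hcb : (1-c)*μ = b := by
    have hμθ : μ = 1 - θ := by linarith
    rw [hμθ, hc]; field_simp; linarith
  have key : c • u + (1 - c) • z = a • u + b • v := by
    rw [hz, smul_add, smul_smul, smul_smul, ← add_assoc, ← add_smul, hca, hcb]
  have hge : (1 : ℝ) ≤ c * 1 + (1 - c) * ‖z‖ := by
    calc (1:ℝ) = ‖a • u + b • v‖ := h1.symm
    _ = ‖c • u + (1 - c) • z‖ := by rw [key]
    _ ≤ ‖c • u‖ + ‖(1-c) • z‖ := norm_add_le _ _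
    _ = c * 1 + (1 - c) * ‖z‖ := by
        rw [norm_smul, norm_smul, Real.norm_of_nonneg hc0,
          Real.norm_of_nonneg (by linarith), hu]
  nlinarith [hzle]

lemma seg_norm_one {u v : X} (hu : ‖u‖ = 1) (hv : ‖v‖ = 1) {a b : ℝ}
    (ha : 0 < a) (hb : 0 < b) (hab : a + b = 1) (h1 : ‖a • u + b • v‖ = 1) :
    ∀ z ∈ segment ℝ u v, ‖z‖ = 1 := by
  rintro z ⟨θ, μ, hθ, hμ, hθμ, rfl⟩
  rcases le_total θ a with h | h
  · exact seg_aux hu ha hb hab h1 hθ hμ hθμ hv h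
  · have hba : b + a = 1 := by linarith
    have h1' : ‖b • v + a • u‖ = 1 := by rwa [add_comm] at h1
    have hμb : μ ≤ b := by linarith
    have := seg_aux hv hb ha hba h1' hμ hθ (by linarith) hu hμb
    rwa [add_comm] at this



/-- Coordinate functionals for an independent pair in a 2-dimensional space. -/
lemma coord_pair (hdim : finrank ℝ X = 2) {u v : X}
    (hind : ∀ s t : ℝ, s • u + t • v = 0 → s = 0 ∧ t = 0) :
    ∃ c₀ c₁ : X →L[ℝ] ℝ, (∀ y : X, y = c₀ y • u + c₁ y • v) ∧
      c₀ u = 1 ∧ c₀ v = 0 ∧ c₁ u = 0 ∧ c₁ v = 1 := by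
  haveI : FiniteDimensional ℝ X := FiniteDimensional.of_finrank_eq_succ hdim
  have li : LinearIndependent ℝ ![u, v] := LinearIndependent.pair_iff.2 hind
  have hcard : Fintype.card (Fin 2) = finrank ℝ X := by simp [hdim]
  set B := basisOfLinearIndependentOfCardEqFinrank li hcard with hB
  have hBcoe : ⇑B = ![u, v] := coe_basisOfLinearIndependentOfCardEqFinrank li hcard
  have hB0 : B 0 = u := by rw [hBcoe]; rfl
  have hB1 : B 1 = v := by rw [hBcoe]; rfl
  refine ⟨LinearMap.toContinuousLinearMap (B.coord 0),
    LinearMap.toContinuousLinearMap (B.coord 1), ?_, ?_, ?_, ?_, ?_⟩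
  · intro y
    have := B.sum_repr y
    rw [Fin.sum_univ_two, hB0, hB1] at this
    simpa [Basis.coord_apply] using this.symm
  · simp [← hB0, Basis.coord_apply, Basis.repr_self]
  · simp [← hB0, ← hB1, Basis.coord_apply, Basis.repr_self, Finsupp.single_apply]
  · simp [← hB0, ← hB1, Basis.coord_apply, Basis.repr_self, Finsupp.single_apply]
  · simp [← hB1, Basis.coord_apply, Basis.repr_self]

/-- A norming functional of an interior point of a flat takes value 1 at both endpoints. -/
lemma norming_flat {φ : X →L[ℝ] ℝ} (hφ : ‖φ‖ = 1) {u v : X} (hu : ‖u‖ = 1) (hv : ‖v‖ = 1)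
    {a b : ℝ} (ha : 0 < a) (hb : 0 < b) (hab : a + b = 1)
    (hφx : φ (a • u + b • v) = 1) : φ u = 1 ∧ φ v = 1 := by
  have h1 : φ u ≤ 1 := by
    calc φ u ≤ |φ u| := le_abs_self _
    _ ≤ ‖φ‖ * ‖u‖ := φ.le_opNorm u
    _ = 1 := by rw [hφ, hu]; ring
  have h2 : φ v ≤ 1 := by
    calc φ v ≤ |φ v| := le_abs_self _
    _ ≤ ‖φ‖ * ‖v‖ := φ.le_opNorm v
    _ = 1 := by rw [hφ, hv]; ring
  have h3 : a * φ u + b * φ v = 1 := by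
    rw [← hφx]; simp [map_add, map_smul]
  constructor <;> nlinarith

lemma unit_ne_zero {x : X} (hx : ‖x‖ = 1) : x ≠ 0 := by
  intro h; rw [h, norm_zero] at hx; norm_num at hx

/-- If a norming functional attains 1 at two distinct unit vectors, the midpoint is of
the first type and is normed by the same functional. -/
lemma face_mid {φ : X →L[ℝ] ℝ} {x y : X} (hφ : ‖φ‖ = 1) (hx : ‖x‖ = 1) (hφx : φ x = 1)
    (hy : ‖y‖ = 1) (hφy : φ y = 1) (hne : x ≠ y) :
    FirstType ((1/2 : ℝ) • x + (1/2 : ℝ) • y) ∧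
      IsNorming φ ((1/2 : ℝ) • x + (1/2 : ℝ) • y) := by
  have hseg : ∀ z ∈ segment ℝ x y, ‖z‖ = 1 := by
    rintro z ⟨θ, μ, hθ, hμ, hθμ, rfl⟩
    have hle : ‖θ • x + μ • y‖ ≤ 1 := by
      calc ‖θ • x + μ • y‖ ≤ ‖θ • x‖ + ‖μ • y‖ := norm_add_le _ _
      _ = θ * ‖x‖ + μ * ‖y‖ := by
          rw [norm_smul, norm_smul, Real.norm_of_nonneg hθ, Real.norm_of_nonneg hμ]
      _ = 1 := by rw [hx, hy]; linarith
    have hval : φ (θ • x + μ • y) = 1 := by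
      simp [map_add, map_smul, hφx, hφy]; linarith
    have hge : (1:ℝ) ≤ ‖θ • x + μ • y‖ := by
      calc (1:ℝ) = φ (θ • x + μ • y) := hval.symm
      _ ≤ |φ (θ • x + μ • y)| := le_abs_self _
      _ ≤ ‖φ‖ * ‖θ • x + μ • y‖ := φ.le_opNorm _
      _ = ‖θ • x + μ • y‖ := by rw [hφ]; ring
    linarith
  have hmem : (1/2 : ℝ) • x + (1/2 : ℝ) • y ∈ segment ℝ x y :=
    ⟨1/2, 1/2, by norm_num, by norm_num, by norm_num, rfl⟩
  have hm1 : ‖(1/2 : ℝ) • x + (1/2 : ℝ) • y‖ = 1 := hseg _ hmem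
  refine ⟨⟨hm1, x, y, hne, hx, hy, ⟨1/2, 1/2, by norm_num, by norm_num, by norm_num, rfl⟩,
    hseg⟩, hφ, ?_⟩
  rw [hm1]; simp [map_add, map_smul, hφx, hφy]; norm_num


/-- Endpoints of a flat are linearly independent. -/
lemma flat_indep {u v : X} (hne : u ≠ v) (hu : ‖u‖ = 1) (hv : ‖v‖ = 1)
    (hseg : ∀ z ∈ segment ℝ u v, ‖z‖ = 1) :
    ∀ s t : ℝ, s • u + t • v = 0 → s = 0 ∧ t = 0 := by
  intro s t hst
  by_contra hcon
  have hvne : v ≠ -u := by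
    intro h
    have : (0 : X) ∈ segment ℝ u v := by
      refine ⟨1/2, 1/2, by norm_num, by norm_num, by norm_num, ?_⟩
      rw [h]; module
    have := hseg 0 this
    rw [norm_zero] at this; norm_num at this
  have hs : s ≠ 0 := by
    intro h
    rw [h, zero_smul, zero_add] at hst
    rcases smul_eq_zero.1 hst with h' | h'
    · exact hcon ⟨h, h'⟩
    · exact unit_ne_zero hv h'
  have ht : t ≠ 0 := by
    intro h
    rw [h, zero_smul, add_zero] at hst
    rcases smul_eq_zero.1 hst with h' | h'
    · exact hcon ⟨h', h⟩
    · exact unit_ne_zero hu h'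
  have hveq : v = (-s/t) • u := by
    have : t • v = (-s) • u := by
      rw [neg_smul]
      rw [eq_neg_iff_add_eq_zero, add_comm]
      exact hst
    calc v = t⁻¹ • (t • v) := by rw [smul_smul, inv_mul_cancel₀ ht, one_smul]
    _ = t⁻¹ • ((-s) • u) := by rw [this]
    _ = (-s/t) • u := by rw [smul_smul, mul_comm, ← div_eq_mul_inv]
  have habs : |(-s/t)| = 1 := by
    have := hv
    rw [hveq, norm_smul, hu, mul_one, Real.norm_eq_abs] at this
    exact this
  rcases abs_eq (by norm_num : (0:ℝ) ≤ 1) |>.1 habs with h | h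
  · rw [h, one_smul] at hveq; exact hne hveq.symm
  · rw [h, neg_one_smul] at hveq; exact hvne hveq

/-- Wedge expansion: near a first-type unit vector, the norm agrees with any norming
functional. -/
lemma wedge (hdim : finrank ℝ X = 2) {x : X} (hx : FirstType x) {φ : X →L[ℝ] ℝ}
    (hφ : IsNorming φ x) :
    ∃ ε : ℝ, 0 < ε ∧ ∀ y : X, ‖y - x‖ ≤ ε → ‖y‖ = φ y := by
  obtain ⟨hx1, u, v, hne, hu, hv, hopen, hseg⟩ := hx
  obtain ⟨a, b, ha, hb, hab, hxuv⟩ := hopen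
  obtain ⟨hφn, hφx⟩ := hφ
  have hφx1 : φ x = 1 := by rw [hφx, hx1]
  have huv1 : φ u = 1 ∧ φ v = 1 := by
    apply norming_flat hφn hu hv ha hb hab
    rw [← hxuv] at hφx1; exact hφx1
  have hind := flat_indep hne hu hv hseg
  obtain ⟨c₀, c₁, hdec, hc00, hc01, hc10, hc11⟩ := coord_pair hdim hind
  set C := max ‖c₀‖ ‖c₁‖ + 1 with hC
  have hCpos : 0 < C := by
    have : (0:ℝ) ≤ max ‖c₀‖ ‖c₁‖ := le_trans (norm_nonneg c₀) (le_max_left _ _)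
    linarith
  refine ⟨min a b / C, by positivity, ?_⟩
  intro y hy
  have hbound : ∀ ψ : X →L[ℝ] ℝ, ‖ψ‖ ≤ max ‖c₀‖ ‖c₁‖ → |ψ (y - x)| ≤ min a b := by
    intro ψ hψ
    calc |ψ (y - x)| ≤ ‖ψ‖ * ‖y - x‖ := ψ.le_opNorm _
    _ ≤ C * (min a b / C) := by
        apply mul_le_mul (by linarith) hy (norm_nonneg _) (le_of_lt hCpos)
    _ = min a b := by field_simp
  have hcx0 : c₀ x = a := by rw [← hxuv]; simp [map_add, map_smul, hc00, hc01]
  have hcx1 : c₁ x = b := by rw [← hxuv]; simp [map_add, map_smul, hc10, hc11]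
  have hα : 0 ≤ c₀ y := by
    have h1 : |c₀ (y - x)| ≤ min a b := hbound c₀ (le_max_left _ _)
    have h2 : c₀ (y - x) = c₀ y - a := by rw [map_sub, hcx0]
    have := abs_le.1 h1
    have hmin : min a b ≤ a := min_le_left _ _
    linarith [this.1]
  have hβ : 0 ≤ c₁ y := by
    have h1 : |c₁ (y - x)| ≤ min a b := hbound c₁ (le_max_right _ _)
    have h2 : c₁ (y - x) = c₁ y - b := by rw [map_sub, hcx1]
    have := abs_le.1 h1
    have hmin : min a b ≤ b := min_le_right _ _
    linarith [this.1]
  -- now y = α u + β v with α, β ≥ 0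
  have hydec := hdec y
  have hφy : φ y = c₀ y + c₁ y := by
    conv_lhs => rw [hydec]
    simp [map_add, map_smul, huv1.1, huv1.2]
  have hyle : ‖y‖ ≤ c₀ y + c₁ y := by
    conv_lhs => rw [hydec]
    calc ‖c₀ y • u + c₁ y • v‖ ≤ ‖c₀ y • u‖ + ‖c₁ y • v‖ := norm_add_le _ _
    _ = c₀ y * ‖u‖ + c₁ y * ‖v‖ := by
        rw [norm_smul, norm_smul, Real.norm_of_nonneg hα, Real.norm_of_nonneg hβ]
    _ = c₀ y + c₁ y := by rw [hu, hv]; ring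
  have hyge : φ y ≤ ‖y‖ := by
    calc φ y ≤ |φ y| := le_abs_self _
    _ ≤ ‖φ‖ * ‖y‖ := φ.le_opNorm _
    _ = ‖y‖ := by rw [hφn]; ring
  rw [hφy] at hyge ⊢
  linarith


/-- Equality in the triangle inequality in an independent configuration produces a
first-type direction. -/
lemma triangle_eq_firstType {w d : X}
    (hind : ∀ s t : ℝ, s • w + t • d = 0 → s = 0 ∧ t = 0)
    (heq : ‖w - d‖ + ‖w + d‖ = 2 * ‖w‖) : FirstType (‖w‖⁻¹ • w) := by
  have hw : w ≠ 0 := by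
    intro h
    have := (hind 1 0 (by rw [h]; simp)).1
    norm_num at this
  have hwn : ‖w‖ ≠ 0 := norm_ne_zero_iff.2 hw
  have hA : w - d ≠ 0 := by
    intro h
    have h' : (1 : ℝ) • w + (-1 : ℝ) • d = 0 := by
      rw [one_smul, neg_one_smul, ← sub_eq_add_neg, h]
    have := (hind 1 (-1) h').1
    norm_num at this
  have hB : w + d ≠ 0 := by
    intro h
    have h' : (1 : ℝ) • w + (1 : ℝ) • d = 0 := by rw [one_smul, one_smul, h]
    have := (hind 1 1 h').1
    norm_num at this
  set a := ‖w - d‖ with hadef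
  set b := ‖w + d‖ with hbdef
  have ha : 0 < a := norm_pos_iff.2 hA
  have hb : 0 < b := norm_pos_iff.2 hB
  set Ah := a⁻¹ • (w - d) with hAhdef
  set Bh := b⁻¹ • (w + d) with hBhdef
  have hAh1 : ‖Ah‖ = 1 := norm_smul_inv_norm hA
  have hBh1 : ‖Bh‖ = 1 := norm_smul_inv_norm hB
  have hne : Ah ≠ Bh := by
    intro h
    have h0 : (a⁻¹ - b⁻¹) • w + (-a⁻¹ - b⁻¹) • d = Ah - Bh := by
      rw [hAhdef, hBhdef]; module
    rw [h, sub_self] at h0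
    have := (hind _ _ h0).2
    have h1 : 0 < a⁻¹ + b⁻¹ := by positivity
    rw [sub_eq_iff_eq_add] at this
    nlinarith
  set lam := a / (a + b) with hlam
  set mu := b / (a + b) with hmu
  have hab : 0 < a + b := by linarith
  have hlampos : 0 < lam := div_pos ha hab
  have hmupos : 0 < mu := div_pos hb hab
  have hsum : lam + mu = 1 := by rw [hlam, hmu]; field_simp
  have hcomb : lam • Ah + mu • Bh = ‖w‖⁻¹ • w := by
    rw [hAhdef, hBhdef, smul_smul, smul_smul]
    have h1 : lam * a⁻¹ = (a + b)⁻¹ := by rw [hlam]; field_simp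
    have h2 : mu * b⁻¹ = (a + b)⁻¹ := by rw [hmu]; field_simp
    rw [h1, h2, ← smul_add]
    have h3 : (w - d) + (w + d) = (2 : ℝ) • w := by module
    rw [h3, smul_smul]
    congr 1
    have : a + b = 2 * ‖w‖ := heq
    rw [this]
    field_simp
  have hnorm1 : ‖lam • Ah + mu • Bh‖ = 1 := by
    rw [hcomb]; exact norm_smul_inv_norm hw
  exact ⟨by rw [← hcomb]; exact hnorm1, Ah, Bh, hne, hAh1, hBh1,
    ⟨lam, mu, hlampos, hmupos, hsum, hcomb⟩,
    seg_norm_one hAh1 hBh1 hlampos hmupos hsum hnorm1⟩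


lemma mem_ft_iff {x₁ x₂ x₃ p : X} :
    p ∈ ftSet ![x₁, x₂, x₃] ↔
      ∀ q : X, ‖p - x₁‖ + ‖p - x₂‖ + ‖p - x₃‖ ≤ ‖q - x₁‖ + ‖q - x₂‖ + ‖q - x₃‖ := by
  simp [ftSet, Fin.sum_univ_three]

lemma phi_le {φ : X →L[ℝ] ℝ} (hφ : ‖φ‖ = 1) (z : X) : φ z ≤ ‖z‖ := by
  calc φ z ≤ |φ z| := le_abs_self _
  _ ≤ ‖φ‖ * ‖z‖ := φ.le_opNorm _
  _ = ‖z‖ := by rw [hφ]; ring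

lemma mem_ft_of_norming {x₁ x₂ x₃ : X} {φ₁ φ₂ φ₃ : X →L[ℝ] ℝ}
    (h₁ : IsNorming φ₁ x₁) (h₂ : IsNorming φ₂ x₂) (h₃ : IsNorming φ₃ x₃)
    (hsum : φ₁ + φ₂ + φ₃ = 0) {p : X}
    (e₁ : ‖x₁ - p‖ = φ₁ (x₁ - p)) (e₂ : ‖x₂ - p‖ = φ₂ (x₂ - p))
    (e₃ : ‖x₃ - p‖ = φ₃ (x₃ - p)) : p ∈ ftSet ![x₁, x₂, x₃] := by
  rw [mem_ft_iff]
  intro q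
  have hzero : ∀ z : X, φ₁ z + φ₂ z + φ₃ z = 0 := by
    intro z
    have := congrArg (fun ψ : X →L[ℝ] ℝ => ψ z) hsum
    simpa using this
  have hp : ‖p - x₁‖ + ‖p - x₂‖ + ‖p - x₃‖ = ‖x₁‖ + ‖x₂‖ + ‖x₃‖ := by
    rw [norm_sub_rev p x₁, norm_sub_rev p x₂, norm_sub_rev p x₃, e₁, e₂, e₃]
    have h := hzero p
    simp only [map_sub]
    rw [h₁.2, h₂.2, h₃.2]
    linarith
  have hq : ‖x₁‖ + ‖x₂‖ + ‖x₃‖ ≤ ‖q - x₁‖ + ‖q - x₂‖ + ‖q - x₃‖ := by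
    have g₁ : φ₁ (x₁ - q) ≤ ‖q - x₁‖ := by
      rw [norm_sub_rev]; exact phi_le h₁.1 _
    have g₂ : φ₂ (x₂ - q) ≤ ‖q - x₂‖ := by
      rw [norm_sub_rev]; exact phi_le h₂.1 _
    have g₃ : φ₃ (x₃ - q) ≤ ‖q - x₃‖ := by
      rw [norm_sub_rev]; exact phi_le h₃.1 _
    have h := hzero q
    simp only [map_sub] at g₁ g₂ g₃
    rw [h₁.2] at g₁; rw [h₂.2] at g₂; rw [h₃.2] at g₃
    linarith
  linarith

lemma eq_of_mem_singleton_ft {x₁ x₂ x₃ : X} {p p' p'' : X}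
    (h : ftSet ![x₁, x₂, x₃] = {p}) (h' : p' ∈ ftSet ![x₁, x₂, x₃])
    (h'' : p'' ∈ ftSet ![x₁, x₂, x₃]) : p' = p'' := by
  rw [h, Set.mem_singleton_iff] at h' h''
  rw [h', h'']

lemma not_firstCondition (hdim : finrank ℝ X = 2)
    (huniq : ∀ x₁ x₂ x₃ : X, ∃ p : X, ftSet ![x₁, x₂, x₃] = {p}) :
    ¬ FirstCondition X := by
  rintro ⟨x₁, x₂, x₃, φ₁, φ₂, φ₃, t₁, t₂, t₃, n₁, n₂, n₃, hsum⟩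
  obtain ⟨ε₁, hε₁, w₁⟩ := wedge hdim t₁ n₁
  obtain ⟨ε₂, hε₂, w₂⟩ := wedge hdim t₂ n₂
  obtain ⟨ε₃, hε₃, w₃⟩ := wedge hdim t₃ n₃
  set ε := min (min ε₁ ε₂) ε₃ with hε
  have hεpos : 0 < ε := lt_min (lt_min hε₁ hε₂) hε₃
  have hmem0 : (0 : X) ∈ ftSet ![x₁, x₂, x₃] := by
    apply mem_ft_of_norming n₁ n₂ n₃ hsum <;> rw [sub_zero] <;>
      [exact n₁.2.symm; exact n₂.2.symm; exact n₃.2.symm]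
  have hnorm : ∀ i : Fin 3, ‖ε • x₁‖ = ε := by
    intro _
    rw [norm_smul, Real.norm_of_nonneg hεpos.le, t₁.1, mul_one]
  have key : ∀ (x : X) (φ : X →L[ℝ] ℝ) (εi : ℝ), (∀ y : X, ‖y - x‖ ≤ εi → ‖y‖ = φ y) →
      ε ≤ εi → ‖x - ε • x₁‖ = φ (x - ε • x₁) := by
    intro x φ εi hw hle
    apply hw
    rw [sub_sub_cancel_left, norm_neg, hnorm 0]
    exact hle
  have hmem1 : ε • x₁ ∈ ftSet ![x₁, x₂, x₃] := by
    apply mem_ft_of_norming n₁ n₂ n₃ hsum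
    · exact key x₁ φ₁ ε₁ w₁ (le_trans (min_le_left _ _) (min_le_left _ _))
    · exact key x₂ φ₂ ε₂ w₂ (le_trans (min_le_left _ _) (min_le_right _ _))
    · exact key x₃ φ₃ ε₃ w₃ (min_le_right _ _)
  obtain ⟨p, hp⟩ := huniq x₁ x₂ x₃
  have h0 : (0 : X) = ε • x₁ := eq_of_mem_singleton_ft hp hmem0 hmem1
  have : ‖ε • x₁‖ = 0 := by rw [← h0, norm_zero]
  rw [hnorm 0] at this
  exact hεpos.ne' this


lemma not_secondCondition (hdim : finrank ℝ X = 2)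
    (huniq : ∀ x₁ x₂ x₃ : X, ∃ p : X, ftSet ![x₁, x₂, x₃] = {p}) :
    ¬ SecondCondition X := by
  rintro ⟨x₁, x₂, x₃, φ₁, φ₂, φ₃, t₁, t₂, t₃, n₁, n₂, n₃, hsum, -⟩
  obtain ⟨ε₁, hε₁, w₁⟩ := wedge hdim t₁ n₁
  obtain ⟨ε₂, hε₂, w₂⟩ := wedge hdim t₂ n₂
  set t := min (min ε₁ ε₂) 1 with ht
  have htpos : 0 < t := lt_min (lt_min hε₁ hε₂) one_pos
  have ht1 : t ≤ 1 := min_le_right _ _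
  have hx₃ : ‖x₃‖ = 1 := t₃.1
  have hnorm : ‖t • x₃‖ = t := by
    rw [norm_smul, Real.norm_of_nonneg htpos.le, hx₃, mul_one]
  have hmem0 : (0 : X) ∈ ftSet ![x₁, x₂, x₃] := by
    apply mem_ft_of_norming n₁ n₂ n₃ hsum <;> rw [sub_zero] <;>
      [exact n₁.2.symm; exact n₂.2.symm; exact n₃.2.symm]
  have key : ∀ (x : X) (φ : X →L[ℝ] ℝ) (εi : ℝ), (∀ y : X, ‖y - x‖ ≤ εi → ‖y‖ = φ y) →
      t ≤ εi → ‖x - t • x₃‖ = φ (x - t • x₃) := by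
    intro x φ εi hw hle
    apply hw
    rw [sub_sub_cancel_left, norm_neg, hnorm]
    exact hle
  have e₃ : ‖x₃ - t • x₃‖ = φ₃ (x₃ - t • x₃) := by
    have hrw : x₃ - t • x₃ = (1 - t) • x₃ := by module
    rw [hrw, norm_smul, Real.norm_of_nonneg (by linarith), hx₃, map_smul]
    have : φ₃ x₃ = 1 := by rw [n₃.2, hx₃]
    rw [this]
    simp
  have hmem1 : t • x₃ ∈ ftSet ![x₁, x₂, x₃] := by
    apply mem_ft_of_norming n₁ n₂ n₃ hsum
    · exact key x₁ φ₁ ε₁ w₁ (le_trans (min_le_left _ _) (min_le_left _ _))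
    · exact key x₂ φ₂ ε₂ w₂ (le_trans (min_le_left _ _) (min_le_right _ _))
    · exact e₃
  obtain ⟨p, hp⟩ := huniq x₁ x₂ x₃
  have h0 : (0 : X) = t • x₃ := eq_of_mem_singleton_ft hp hmem0 hmem1
  have : ‖t • x₃‖ = 0 := by rw [← h0, norm_zero]
  rw [hnorm] at this
  exact htpos.ne' this

lemma not_thirdCondition (hdim : finrank ℝ X = 2)
    (huniq : ∀ x₁ x₂ x₃ : X, ∃ p : X, ftSet ![x₁, x₂, x₃] = {p}) :
    ¬ ThirdCondition X := by
  rintro ⟨x₁, x₂, x₃, φ₁, φ₂, φ₃, t₁, t₂, hanti, t₃, n₁, n₂, n₃, hsum, -, -⟩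
  obtain ⟨ε₃, hε₃, w₃⟩ := wedge hdim t₃ n₃
  set t := min ε₃ 1 with ht
  have htpos : 0 < t := lt_min hε₃ one_pos
  have ht1 : t ≤ 1 := min_le_right _ _
  have hx₁ : ‖x₁‖ = 1 := t₁.1
  have hx₂ : ‖x₂‖ = 1 := t₂.1
  have hnorm : ‖t • x₁‖ = t := by
    rw [norm_smul, Real.norm_of_nonneg htpos.le, hx₁, mul_one]
  have hmem0 : (0 : X) ∈ ftSet ![x₁, x₂, x₃] := by
    apply mem_ft_of_norming n₁ n₂ n₃ hsum <;> rw [sub_zero] <;>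
      [exact n₁.2.symm; exact n₂.2.symm; exact n₃.2.symm]
  have e₁ : ‖x₁ - t • x₁‖ = φ₁ (x₁ - t • x₁) := by
    have hrw : x₁ - t • x₁ = (1 - t) • x₁ := by module
    rw [hrw, norm_smul, Real.norm_of_nonneg (by linarith), hx₁, map_smul]
    have : φ₁ x₁ = 1 := by rw [n₁.2, hx₁]
    rw [this]
    simp
  have e₂ : ‖x₂ - t • x₁‖ = φ₂ (x₂ - t • x₁) := by
    have hrw : x₂ - t • x₁ = (1 + t) • x₂ := by rw [hanti]; module
    rw [hrw, norm_smul, Real.norm_of_nonneg (by linarith), hx₂, map_smul]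
    have : φ₂ x₂ = 1 := by rw [n₂.2, hx₂]
    rw [this]
    simp
  have e₃ : ‖x₃ - t • x₁‖ = φ₃ (x₃ - t • x₁) := by
    apply w₃
    rw [sub_sub_cancel_left, norm_neg, hnorm]
    exact min_le_left _ _
  have hmem1 : t • x₁ ∈ ftSet ![x₁, x₂, x₃] :=
    mem_ft_of_norming n₁ n₂ n₃ hsum e₁ e₂ e₃
  obtain ⟨p, hp⟩ := huniq x₁ x₂ x₃
  have h0 : (0 : X) = t • x₁ := eq_of_mem_singleton_ft hp hmem0 hmem1
  have : ‖t • x₁‖ = 0 := by rw [← h0, norm_zero]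
  rw [hnorm] at this
  exact htpos.ne' this


lemma wedge_scaled (hdim : finrank ℝ X = 2) {w : X} (hw : w ≠ 0)
    (hft : FirstType (‖w‖⁻¹ • w)) {φ : X →L[ℝ] ℝ} (hφ : IsNorming φ (‖w‖⁻¹ • w)) :
    ∃ ε : ℝ, 0 < ε ∧ ∀ h : X, ‖h‖ ≤ ε → ‖w + h‖ = φ (w + h) := by
  obtain ⟨ε', hε', hwedge⟩ := wedge hdim hft hφ
  have ha : 0 < ‖w‖ := norm_pos_iff.2 hw
  refine ⟨‖w‖ * ε', by positivity, ?_⟩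
  intro h hh
  have hkey : w + h = ‖w‖ • (‖w‖⁻¹ • w + ‖w‖⁻¹ • h) := by
    rw [smul_add, smul_smul, smul_smul, mul_inv_cancel₀ ha.ne', one_smul, one_smul]
  have hdist : ‖(‖w‖⁻¹ • w + ‖w‖⁻¹ • h) - ‖w‖⁻¹ • w‖ ≤ ε' := by
    rw [add_sub_cancel_left, norm_smul, Real.norm_of_nonneg (by positivity)]
    calc ‖w‖⁻¹ * ‖h‖ ≤ ‖w‖⁻¹ * (‖w‖ * ε') :=
      mul_le_mul_of_nonneg_left hh (by positivity)
    _ = ε' := by field_simp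
  have := hwedge _ hdist
  rw [hkey, norm_smul, Real.norm_of_nonneg ha.le, this, map_smul, smul_eq_mul]

lemma sum_zero_of_nonneg_small {ψ : X →L[ℝ] ℝ} {ε : ℝ} (hε : 0 < ε)
    (h : ∀ h : X, ‖h‖ ≤ ε → 0 ≤ ψ h) : ψ = 0 := by
  ext z
  rcases eq_or_ne z 0 with rfl | hz
  · simp
  · have hzn : 0 < ‖z‖ := norm_pos_iff.2 hz
    set t := ε / ‖z‖ with htdef
    have ht : 0 < t := by positivity
    have htz : ‖t • z‖ ≤ ε := by
      rw [norm_smul, Real.norm_of_nonneg ht.le, htdef]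
      rw [div_mul_cancel₀ _ hzn.ne']
    have h1 : 0 ≤ ψ (t • z) := h _ htz
    have h2 : 0 ≤ ψ (-(t • z)) := h _ (by rwa [norm_neg])
    rw [map_smul, smul_eq_mul] at h1
    rw [map_neg, map_smul, smul_eq_mul] at h2
    have : ψ z = 0 := by nlinarith
    simpa using this

lemma unit_norm_inv {w : X} (hw : w ≠ 0) : ‖‖w‖⁻¹ • w‖ = 1 := norm_smul_inv_norm hw

/-- Case L1: all three directions of the first type. -/
lemma caseL1 (hdim : finrank ℝ X = 2) {w₁ w₂ w₃ : X}
    (h₁ : w₁ ≠ 0) (h₂ : w₂ ≠ 0) (h₃ : w₃ ≠ 0)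
    (Hmin : ∀ h : X, ‖w₁‖ + ‖w₂‖ + ‖w₃‖ ≤ ‖w₁ + h‖ + ‖w₂ + h‖ + ‖w₃ + h‖)
    (f₁ : FirstType (‖w₁‖⁻¹ • w₁)) (f₂ : FirstType (‖w₂‖⁻¹ • w₂))
    (f₃ : FirstType (‖w₃‖⁻¹ • w₃)) : FirstCondition X := by
  haveI : Nontrivial X := nontrivial_of_ne w₁ 0 h₁
  obtain ⟨φ₁, hφ₁n, hφ₁x⟩ := exists_dual_vector ℝ _ (norm_ne_zero_iff.2 (unit_ne_zero (unit_norm_inv h₁)))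
  obtain ⟨φ₂, hφ₂n, hφ₂x⟩ := exists_dual_vector ℝ _ (norm_ne_zero_iff.2 (unit_ne_zero (unit_norm_inv h₂)))
  obtain ⟨φ₃, hφ₃n, hφ₃x⟩ := exists_dual_vector ℝ _ (norm_ne_zero_iff.2 (unit_ne_zero (unit_norm_inv h₃)))
  have n₁ : IsNorming φ₁ (‖w₁‖⁻¹ • w₁) := ⟨hφ₁n, hφ₁x⟩
  have n₂ : IsNorming φ₂ (‖w₂‖⁻¹ • w₂) := ⟨hφ₂n, hφ₂x⟩
  have n₃ : IsNorming φ₃ (‖w₃‖⁻¹ • w₃) := ⟨hφ₃n, hφ₃x⟩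
  obtain ⟨ε₁, hε₁, W₁⟩ := wedge_scaled hdim h₁ f₁ n₁
  obtain ⟨ε₂, hε₂, W₂⟩ := wedge_scaled hdim h₂ f₂ n₂
  obtain ⟨ε₃, hε₃, W₃⟩ := wedge_scaled hdim h₃ f₃ n₃
  set ε := min (min ε₁ ε₂) ε₃ with hε
  have hεpos : 0 < ε := lt_min (lt_min hε₁ hε₂) hε₃
  have e₁0 : ‖w₁‖ = φ₁ w₁ := by simpa using W₁ 0 (by simp; positivity)
  have e₂0 : ‖w₂‖ = φ₂ w₂ := by simpa using W₂ 0 (by simp; positivity)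
  have e₃0 : ‖w₃‖ = φ₃ w₃ := by simpa using W₃ 0 (by simp; positivity)
  have hsum : φ₁ + φ₂ + φ₃ = 0 := by
    apply sum_zero_of_nonneg_small hεpos
    intro h hh
    have k₁ := W₁ h (le_trans hh (le_trans (min_le_left _ _) (min_le_left _ _)))
    have k₂ := W₂ h (le_trans hh (le_trans (min_le_left _ _) (min_le_right _ _)))
    have k₃ := W₃ h (le_trans hh (min_le_right _ _))
    have := Hmin h
    rw [k₁, k₂, k₃] at this
    simp only [map_add] at this
    simp only [ContinuousLinearMap.add_apply]
    linarith
  exact ⟨_, _, _, φ₁, φ₂, φ₃, f₁, f₂, f₃, n₁, n₂, n₃, hsum⟩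

/-- Case L0: all three directions parallel to the segment — impossible. -/
lemma caseL0 {w₁ w₂ w₃ d : X} (hd : d ≠ 0)
    (Hmin : ∀ h : X, ‖w₁‖ + ‖w₂‖ + ‖w₃‖ ≤ ‖w₁ + h‖ + ‖w₂ + h‖ + ‖w₃ + h‖)
    {r₁ r₂ r₃ : ℝ} (hr₁ : r₁ ≠ 0) (hr₂ : r₂ ≠ 0) (hr₃ : r₃ ≠ 0)
    (hw₁ : w₁ = r₁ • d) (hw₂ : w₂ = r₂ • d) (hw₃ : w₃ = r₃ • d) : False := by
  have hdn : 0 < ‖d‖ := norm_pos_iff.2 hd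
  set σ : ℝ → ℝ := fun r => if 0 < r then 1 else -1 with hσ
  have habs : ∀ (r s : ℝ), r ≠ 0 → |s| ≤ |r| → |r + s| = |r| + σ r * s := by
    intro r s hr hs
    rcases lt_trichotomy r 0 with h | h | h
    · rw [hσ]; simp only [if_neg (not_lt.2 h.le)]
      rw [abs_of_neg h] at hs ⊢
      rw [abs_of_nonpos (by cases abs_le.1 hs; linarith)]
      ring
    · exact absurd h hr
    · rw [hσ]; simp only [if_pos h]
      rw [abs_of_pos h] at hs ⊢
      rw [abs_of_nonneg (by cases abs_le.1 hs; linarith)]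
      ring
  have key : ∀ s : ℝ, |s| ≤ min (min |r₁| |r₂|) |r₃| →
      0 ≤ (σ r₁ + σ r₂ + σ r₃) * s * ‖d‖ := by
    intro s hs
    have h1 := habs r₁ s hr₁ (le_trans hs (le_trans (min_le_left _ _) (min_le_left _ _)))
    have h2 := habs r₂ s hr₂ (le_trans hs (le_trans (min_le_left _ _) (min_le_right _ _)))
    have h3 := habs r₃ s hr₃ (le_trans hs (min_le_right _ _))
    have := Hmin (s • d)
    rw [hw₁, hw₂, hw₃] at this
    have hn : ∀ r : ℝ, ‖r • d + s • d‖ = |r + s| * ‖d‖ := by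
      intro r
      rw [← add_smul, norm_smul, Real.norm_eq_abs]
    rw [hn r₁, hn r₂, hn r₃, h1, h2, h3] at this
    have hnr : ∀ r : ℝ, ‖(r : ℝ) • d‖ = |r| * ‖d‖ := by
      intro r; rw [norm_smul, Real.norm_eq_abs]
    rw [hnr r₁, hnr r₂, hnr r₃] at this
    nlinarith
  set δ := min (min |r₁| |r₂|) |r₃| with hδ
  have hδpos : 0 < δ :=
    lt_min (lt_min (abs_pos.2 hr₁) (abs_pos.2 hr₂)) (abs_pos.2 hr₃)
  have k1 := key δ (by rw [abs_of_pos hδpos])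
  have k2 := key (-δ) (by rw [abs_neg, abs_of_pos hδpos])
  have hpos : 0 < δ * ‖d‖ := mul_pos hδpos hdn
  have hsig : σ r₁ + σ r₂ + σ r₃ = 0 := by
    have e1 : 0 ≤ (σ r₁ + σ r₂ + σ r₃) * (δ * ‖d‖) := by nlinarith
    have e2 : (σ r₁ + σ r₂ + σ r₃) * (δ * ‖d‖) ≤ 0 := by nlinarith
    have := le_antisymm e2 e1
    rcases mul_eq_zero.1 this with h | h
    · exact h
    · exact absurd h hpos.ne'
  have : ∀ r : ℝ, σ r = 1 ∨ σ r = -1 := by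
    intro r
    by_cases h : 0 < r
    · left; simp [hσ, h]
    · right; simp [hσ, h]
  rcases this r₁ with h1 | h1 <;> rcases this r₂ with h2 | h2 <;>
    rcases this r₃ with h3 | h3 <;> rw [h1, h2, h3] at hsig <;> norm_num at hsig


/-- Case L2: two first-type directions, one zero-type direction. -/
lemma caseL2 (hdim : finrank ℝ X = 2) {w₁ w₂ w₃ : X}
    (h₁ : w₁ ≠ 0) (h₂ : w₂ ≠ 0) (h₃ : w₃ ≠ 0)
    (Hmin : ∀ h : X, ‖w₁‖ + ‖w₂‖ + ‖w₃‖ ≤ ‖w₁ + h‖ + ‖w₂ + h‖ + ‖w₃ + h‖)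
    (f₁ : FirstType (‖w₁‖⁻¹ • w₁)) (f₂ : FirstType (‖w₂‖⁻¹ • w₂))
    (z₃ : ¬ FirstType (‖w₃‖⁻¹ • w₃)) : FirstCondition X ∨ SecondCondition X := by
  haveI : Nontrivial X := nontrivial_of_ne w₁ 0 h₁
  obtain ⟨φ₁, hφ₁n, hφ₁x⟩ := exists_dual_vector ℝ _ (norm_ne_zero_iff.2 (unit_ne_zero (unit_norm_inv h₁)))
  obtain ⟨φ₂, hφ₂n, hφ₂x⟩ := exists_dual_vector ℝ _ (norm_ne_zero_iff.2 (unit_ne_zero (unit_norm_inv h₂)))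
  have n₁ : IsNorming φ₁ (‖w₁‖⁻¹ • w₁) := ⟨hφ₁n, hφ₁x⟩
  have n₂ : IsNorming φ₂ (‖w₂‖⁻¹ • w₂) := ⟨hφ₂n, hφ₂x⟩
  obtain ⟨ε₁, hε₁, W₁⟩ := wedge_scaled hdim h₁ f₁ n₁
  obtain ⟨ε₂, hε₂, W₂⟩ := wedge_scaled hdim h₂ f₂ n₂
  set d₃ : X := ‖w₃‖⁻¹ • w₃ with hd₃def
  have hd₃u : ‖d₃‖ = 1 := unit_norm_inv h₃
  have ha₃ : 0 < ‖w₃‖ := norm_pos_iff.2 h₃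
  have hw₃d : w₃ = ‖w₃‖ • d₃ := by
    rw [hd₃def, smul_smul, mul_inv_cancel₀ ha₃.ne', one_smul]
  set φ₃ := -φ₁ - φ₂ with hφ₃def
  have hφ₃app : ∀ y : X, φ₃ y = -φ₁ y - φ₂ y := by
    intro y; rw [hφ₃def]; simp
  set ε := min ε₁ ε₂ with hεdef
  have hεpos : 0 < ε := lt_min hε₁ hε₂
  have e₁0 : ‖w₁‖ = φ₁ w₁ := by simpa using W₁ 0 (by simp; positivity)
  have e₂0 : ‖w₂‖ = φ₂ w₂ := by simpa using W₂ 0 (by simp; positivity)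
  -- key inequality from minimality
  have keyineq : ∀ h : X, ‖h‖ ≤ ε → ‖w₃‖ + φ₃ h ≤ ‖w₃ + h‖ := by
    intro h hh
    have k₁ := W₁ h (le_trans hh (min_le_left _ _))
    have k₂ := W₂ h (le_trans hh (min_le_right _ _))
    have := Hmin h
    rw [k₁, k₂] at this
    simp only [map_add] at this
    rw [hφ₃app]
    linarith
  -- φ₃ is bounded by the norm
  have hφ₃le : ∀ y : X, φ₃ y ≤ ‖y‖ := by
    intro y
    rcases eq_or_ne y 0 with rfl | hy
    · simp
    · have hyn : 0 < ‖y‖ := norm_pos_iff.2 hy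
      set s := ε / ‖y‖ with hsdef
      have hs : 0 < s := by positivity
      have hsy : ‖s • y‖ ≤ ε := by
        rw [norm_smul, Real.norm_of_nonneg hs.le, hsdef, div_mul_cancel₀ _ hyn.ne']
      have h1 := keyineq (s • y) hsy
      have h2 : ‖w₃ + s • y‖ ≤ ‖w₃‖ + s * ‖y‖ := by
        calc ‖w₃ + s • y‖ ≤ ‖w₃‖ + ‖s • y‖ := norm_add_le _ _
        _ = ‖w₃‖ + s * ‖y‖ := by rw [norm_smul, Real.norm_of_nonneg hs.le]
      rw [map_smul, smul_eq_mul] at h1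
      nlinarith
  have hφ₃normle : ‖φ₃‖ ≤ 1 := by
    apply ContinuousLinearMap.opNorm_le_bound _ zero_le_one
    intro y
    rw [one_mul, Real.norm_eq_abs, abs_le]
    constructor
    · have := hφ₃le (-y); rw [map_neg, norm_neg] at this; linarith
    · exact hφ₃le y
  -- value at d₃
  have hφ₃d₃ : φ₃ d₃ = 1 := by
    have key : ∀ s : ℝ, |s| ≤ min ε ‖w₃‖ → 0 ≤ s * (1 - φ₃ d₃) := by
      intro s hs
      have hsε : ‖s • d₃‖ ≤ ε := by
        rw [norm_smul, Real.norm_eq_abs, hd₃u, mul_one]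
        exact le_trans hs (min_le_left _ _)
      have h1 := keyineq (s • d₃) hsε
      have h2 : ‖w₃ + s • d₃‖ = ‖w₃‖ + s := by
        have hbnd := abs_le.1 (le_trans hs (min_le_right _ _))
        conv_lhs => rw [hw₃d]
        rw [← add_smul, norm_smul, Real.norm_eq_abs, hd₃u, mul_one]
        rw [abs_of_nonneg (by linarith [hbnd.1])]
      rw [h2, map_smul, smul_eq_mul] at h1
      nlinarith
    set δ := min ε ‖w₃‖ with hδdef
    have hδpos : 0 < δ := lt_min hεpos ha₃
    have k1 := key δ (by rw [abs_of_pos hδpos])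
    have k2 := key (-δ) (by rw [abs_neg, abs_of_pos hδpos])
    nlinarith
  have hφ₃norm : ‖φ₃‖ = 1 := by
    apply le_antisymm hφ₃normle
    have : (1:ℝ) = φ₃ d₃ := hφ₃d₃.symm
    calc (1:ℝ) = φ₃ d₃ := hφ₃d₃.symm
    _ ≤ |φ₃ d₃| := le_abs_self _
    _ ≤ ‖φ₃‖ * ‖d₃‖ := φ₃.le_opNorm _
    _ = ‖φ₃‖ := by rw [hd₃u, mul_one]
  have n₃ : IsNorming φ₃ d₃ := ⟨hφ₃norm, by rw [hφ₃d₃, hd₃u]⟩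
  have hsum : φ₁ + φ₂ + φ₃ = 0 := by rw [hφ₃def]; abel
  by_cases hface : ∀ y : X, ‖y‖ = 1 → φ₃ y = 1 → y = d₃
  · right
    exact ⟨_, _, d₃, φ₁, φ₂, φ₃, f₁, f₂, ⟨hd₃u, z₃⟩, n₁, n₂, n₃, hsum, hface⟩
  · left
    push_neg at hface
    obtain ⟨y, hyu, hφy, hyne⟩ := hface
    have hmid := face_mid hφ₃norm hd₃u hφ₃d₃ hyu hφy (Ne.symm hyne)
    exact ⟨_, _, _, φ₁, φ₂, φ₃, f₁, f₂, hmid.1, n₁, n₂, hmid.2, hsum⟩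


lemma dep_pair {x y : X} (hx : x ≠ 0) (hy : y ≠ 0)
    (h : ¬ ∀ s t : ℝ, s • x + t • y = 0 → s = 0 ∧ t = 0) :
    ∃ c : ℝ, c ≠ 0 ∧ x = c • y := by
  push_neg at h
  obtain ⟨s, t, hst, hne⟩ := h
  by_cases hs : s = 0
  · exfalso
    rw [hs, zero_smul, zero_add] at hst
    rcases smul_eq_zero.1 hst with h' | h'
    · exact hne hs h'
    · exact hy h'
  · have hxeq : x = (-t/s) • y := by
      have h0 : s • x = (-t) • y := by
        rw [neg_smul]
        exact eq_neg_of_add_eq_zero_left hst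
      calc x = s⁻¹ • (s • x) := by rw [smul_smul, inv_mul_cancel₀ hs, one_smul]
      _ = s⁻¹ • ((-t) • y) := by rw [h0]
      _ = (-t/s) • y := by rw [smul_smul, mul_comm, ← div_eq_mul_inv]
    refine ⟨-t/s, ?_, hxeq⟩
    intro h0
    rw [h0, zero_smul] at hxeq
    exact hx hxeq

/-- Monotonicity of difference quotients of the norm along a ray. -/
lemma Q_mono {d₁ z : X} (hd₁ : ‖d₁‖ = 1) {s t : ℝ} (hs : 0 < s) (hst : s ≤ t) :
    (‖d₁ + s • z‖ - 1) / s ≤ (‖d₁ + t • z‖ - 1) / t := by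
  have ht : 0 < t := lt_of_lt_of_le hs hst
  have h1 : s / t * t = s := div_mul_cancel₀ s ht.ne'
  have key : (1 - s/t) • d₁ + (s/t) • (d₁ + t • z) = d₁ + s • z := by
    rw [smul_add, smul_smul, h1, ← add_assoc, ← add_smul, sub_add_cancel, one_smul]
  have hb : ‖d₁ + s • z‖ ≤ (1 - s/t) + (s/t) * ‖d₁ + t • z‖ := by
    calc ‖d₁ + s • z‖ = ‖(1 - s/t) • d₁ + (s/t) • (d₁ + t • z)‖ := by rw [key]
    _ ≤ ‖(1 - s/t) • d₁‖ + ‖(s/t) • (d₁ + t • z)‖ := norm_add_le _ _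
    _ = (1 - s/t) * ‖d₁‖ + (s/t) * ‖d₁ + t • z‖ := by
        rw [norm_smul, norm_smul, Real.norm_of_nonneg (by
            have : s/t ≤ 1 := (div_le_one ht).2 hst
            linarith),
          Real.norm_of_nonneg (by positivity)]
    _ = (1 - s/t) + (s/t) * ‖d₁ + t • z‖ := by rw [hd₁, mul_one]
  rw [div_le_div_iff₀ hs ht]
  have expand : t * ((1 - s/t) + (s/t) * ‖d₁ + t • z‖) = (t - s) + s * ‖d₁ + t • z‖ := by
    field_simp
  have h2 : t * ‖d₁ + s • z‖ ≤ (t - s) + s * ‖d₁ + t • z‖ :=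
    le_of_le_of_eq (mul_le_mul_of_nonneg_left hb ht.le) expand
  nlinarith [h2]

/-- One-sided slope bound gives a bound of the functional in a half plane. -/
lemma Naux {d₁ z : X} (hd₁ : ‖d₁‖ = 1) {c : ℝ}
    (hc : ∀ t : ℝ, 0 < t → c ≤ (‖d₁ + t • z‖ - 1) / t) :
    ∀ α β : ℝ, 0 < β → α + β * c ≤ ‖α • d₁ + β • z‖ := by
  intro α β hβ
  rcases lt_trichotomy α 0 with hα | hα | hα
  · -- α < 0
    set t := β / (-α) with htdef
    have hα' : 0 < -α := by linarith
    have ht : 0 < t := div_pos hβ hα'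
    have h1 : c * t ≤ ‖d₁ + t • z‖ - 1 := (le_div_iff₀ ht).1 (hc t ht)
    have hαne : α ≠ 0 := ne_of_lt hα
    have hβeq : (-α) * t = β := by
      rw [htdef]
      field_simp
    have h2 : (-α) • d₁ + β • z = (-α) • (d₁ + t • z) := by
      rw [smul_add, smul_smul, hβeq]
    have h3 : ‖(-α) • (d₁ + t • z)‖ = (-α) * ‖d₁ + t • z‖ := by
      rw [norm_smul, Real.norm_of_nonneg hα'.le]
    have h4 : ‖(-α) • d₁ + β • z‖ ≤ ‖α • d₁ + β • z‖ + ‖((-2)*α) • d₁‖ := by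
      have key : (-α) • d₁ + β • z = (α • d₁ + β • z) + ((-2)*α) • d₁ := by module
      rw [key]
      exact norm_add_le _ _
    have h5 : ‖((-2)*α) • d₁‖ = (-2)*α := by
      rw [norm_smul, Real.norm_eq_abs, hd₁, mul_one, abs_of_nonneg (by linarith)]
    have h6 : (-α) * (c * t) ≤ (-α) * (‖d₁ + t • z‖ - 1) :=
      mul_le_mul_of_nonneg_left h1 hα'.le
    -- α + β c = α + (-α) (c t)
    have h7 : β * c = (-α) * (c * t) := by rw [← hβeq]; ring
    rw [h2, h3] at h4
    rw [h5] at h4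
    nlinarith [h4, h6, h7]
  · -- α = 0
    rw [hα]
    have hz : c ≤ ‖z‖ := by
      have := hc 1 one_pos
      have hn : ‖d₁ + (1:ℝ) • z‖ ≤ 1 + ‖z‖ := by
        calc ‖d₁ + (1:ℝ) • z‖ ≤ ‖d₁‖ + ‖(1:ℝ) • z‖ := norm_add_le _ _
        _ = 1 + ‖z‖ := by rw [hd₁, one_smul]
      simp only [div_one] at this
      linarith
    have : β * c ≤ β * ‖z‖ := mul_le_mul_of_nonneg_left hz hβ.le
    simp only [zero_smul, zero_add]
    rw [norm_smul, Real.norm_of_nonneg hβ.le]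
    linarith
  · -- α > 0
    set t := β / α with htdef
    have ht : 0 < t := div_pos hβ hα
    have h1 : c * t ≤ ‖d₁ + t • z‖ - 1 := (le_div_iff₀ ht).1 (hc t ht)
    have hαne : α ≠ 0 := ne_of_gt hα
    have hβeq : α * t = β := by
      rw [htdef]
      field_simp
    have h2 : α • d₁ + β • z = α • (d₁ + t • z) := by
      rw [smul_add, smul_smul, hβeq]
    have h3 : ‖α • (d₁ + t • z)‖ = α * ‖d₁ + t • z‖ := by
      rw [norm_smul, Real.norm_of_nonneg hα.le]
    have h6 : α * (c * t) ≤ α * (‖d₁ + t • z‖ - 1) :=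
      mul_le_mul_of_nonneg_left h1 hα.le
    have h7 : β * c = α * (c * t) := by rw [← hβeq]; ring
    rw [h2, h3]
    nlinarith [h6, h7]

/-- Norm-one criterion from two one-sided slope bounds, in dimension 2. -/
lemma Nlemma (hdim : finrank ℝ X = 2) {d₁ z₀ : X} (hd₁u : ‖d₁‖ = 1)
    (hind : ∀ s t : ℝ, s • d₁ + t • z₀ = 0 → s = 0 ∧ t = 0)
    {χ : X →L[ℝ] ℝ} (hχd : χ d₁ = 1)
    (hp : ∀ t : ℝ, 0 < t → χ z₀ ≤ (‖d₁ + t • z₀‖ - 1) / t)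
    (hm : ∀ t : ℝ, 0 < t → -(χ z₀) ≤ (‖d₁ + t • (-z₀)‖ - 1) / t) : ‖χ‖ = 1 := by
  obtain ⟨c₀, c₁, hdec, hc00, hc01, hc10, hc11⟩ := coord_pair hdim hind
  have claim : ∀ y : X, χ y ≤ ‖y‖ := by
    intro y
    set A := c₀ y with hA
    set B := c₁ y with hB
    have hy : y = A • d₁ + B • z₀ := hdec y
    have hχy : χ y = A + B * χ z₀ := by
      conv_lhs => rw [hy]
      simp only [map_add, map_smul, smul_eq_mul, hχd, mul_one]
    rcases lt_trichotomy B 0 with hBs | hBs | hBs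
    · have hrw : A • d₁ + B • z₀ = A • d₁ + (-B) • (-z₀) := by module
      have := Naux hd₁u hm A (-B) (by linarith)
      rw [hχy]
      calc A + B * χ z₀ = A + (-B) * (-(χ z₀)) := by ring
      _ ≤ ‖A • d₁ + (-B) • (-z₀)‖ := this
      _ = ‖y‖ := by rw [← hrw, ← hy]
    · rw [hχy, hBs]
      have : ‖A • d₁‖ = |A| := by rw [norm_smul, Real.norm_eq_abs, hd₁u, mul_one]
      have hyA : y = A • d₁ := by rw [hy, hBs, zero_smul, add_zero]
      rw [hyA, this]
      have := le_abs_self A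
      linarith
    · have := Naux hd₁u hp A B hBs
      rw [hχy, hy]
      exact this
  have hle : ‖χ‖ ≤ 1 := by
    apply ContinuousLinearMap.opNorm_le_bound _ zero_le_one
    intro y
    rw [one_mul, Real.norm_eq_abs, abs_le]
    refine ⟨?_, claim y⟩
    have := claim (-y)
    rw [map_neg, norm_neg] at this
    linarith
  apply le_antisymm hle
  calc (1:ℝ) = χ d₁ := hχd.symm
  _ ≤ |χ d₁| := le_abs_self _
  _ ≤ ‖χ‖ * ‖d₁‖ := χ.le_opNorm _
  _ = ‖χ‖ := by rw [hd₁u, mul_one]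



lemma dir_smul_pos {d : X} {r : ℝ} (hd : d ≠ 0) (hr : 0 < r) :
    ‖r • d‖⁻¹ • (r • d) = ‖d‖⁻¹ • d := by
  have hdn : 0 < ‖d‖ := norm_pos_iff.2 hd
  rw [norm_smul, Real.norm_eq_abs, abs_of_pos hr, smul_smul]
  congr 1
  field_simp

lemma dir_smul_neg {d : X} {r : ℝ} (hd : d ≠ 0) (hr : r < 0) :
    ‖r • d‖⁻¹ • (r • d) = -(‖d‖⁻¹ • d) := by
  have hdn : 0 < ‖d‖ := norm_pos_iff.2 hd
  rw [norm_smul, Real.norm_eq_abs, abs_of_neg hr, smul_smul, ← neg_smul]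
  congr 1
  field_simp
  rw [div_self (ne_of_lt hr)]

/-- Case L3: two zero-type directions parallel to the doubling direction, one
first-type direction. -/
lemma caseL3 (hdim : finrank ℝ X = 2) {w₁ w₂ w₃ d : X} (hd : d ≠ 0)
    (h₁ : w₁ ≠ 0) (h₂ : w₂ ≠ 0) (h₃ : w₃ ≠ 0)
    (Hmin : ∀ h : X, ‖w₁‖ + ‖w₂‖ + ‖w₃‖ ≤ ‖w₁ + h‖ + ‖w₂ + h‖ + ‖w₃ + h‖)
    (z₁ : ¬ FirstType (‖w₁‖⁻¹ • w₁)) (z₂ : ¬ FirstType (‖w₂‖⁻¹ • w₂))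
    (f₃ : FirstType (‖w₃‖⁻¹ • w₃))
    {r₁ r₂ : ℝ} (hw₁ : w₁ = r₁ • d) (hw₂ : w₂ = r₂ • d) :
    FirstCondition X ∨ SecondCondition X ∨ ThirdCondition X := by
  haveI : Nontrivial X := nontrivial_of_ne w₁ 0 h₁
  set a₁ := ‖w₁‖ with ha₁def
  set a₂ := ‖w₂‖ with ha₂def
  set a₃ := ‖w₃‖ with ha₃def
  have ha₁ : 0 < a₁ := norm_pos_iff.2 h₁
  have ha₂ : 0 < a₂ := norm_pos_iff.2 h₂
  have ha₃ : 0 < a₃ := norm_pos_iff.2 h₃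
  set d₁ : X := a₁⁻¹ • w₁ with hd₁def
  set d₂ : X := a₂⁻¹ • w₂ with hd₂def
  set d₃ : X := a₃⁻¹ • w₃ with hd₃def
  have hd₁u : ‖d₁‖ = 1 := unit_norm_inv h₁
  have hd₂u : ‖d₂‖ = 1 := unit_norm_inv h₂
  have hd₃u : ‖d₃‖ = 1 := unit_norm_inv h₃
  have hw₁d : w₁ = a₁ • d₁ := by
    rw [hd₁def, smul_smul, mul_inv_cancel₀ ha₁.ne', one_smul]
  have hw₂d : w₂ = a₂ • d₂ := by
    rw [hd₂def, smul_smul, mul_inv_cancel₀ ha₂.ne', one_smul]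
  have hr₁ : r₁ ≠ 0 := by rintro rfl; rw [zero_smul] at hw₁; exact h₁ hw₁
  have hr₂ : r₂ ≠ 0 := by rintro rfl; rw [zero_smul] at hw₂; exact h₂ hw₂
  -- the two zero-type directions agree up to sign
  have hd₁₂ : d₂ = d₁ ∨ d₂ = -d₁ := by
    have e₁ : d₁ = ‖r₁ • d‖⁻¹ • (r₁ • d) := by rw [hd₁def, ha₁def, hw₁]
    have e₂ : d₂ = ‖r₂ • d‖⁻¹ • (r₂ • d) := by rw [hd₂def, ha₂def, hw₂]
    rcases lt_or_gt_of_ne hr₁ with hs₁ | hs₁ <;> rcases lt_or_gt_of_ne hr₂ with hs₂ | hs₂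
    · left; rw [e₁, e₂, dir_smul_neg hd hs₁, dir_smul_neg hd hs₂]
    · right; rw [e₁, e₂, dir_smul_pos hd hs₂, dir_smul_neg hd hs₁, neg_neg]
    · right; rw [e₁, e₂, dir_smul_neg hd hs₂, dir_smul_pos hd hs₁]
    · left; rw [e₁, e₂, dir_smul_pos hd hs₁, dir_smul_pos hd hs₂]
  -- norming functional for the first-type direction
  obtain ⟨φ₃, hφ₃n, hφ₃x⟩ := exists_dual_vector ℝ d₃ (norm_ne_zero_iff.2 (unit_ne_zero hd₃u))
  have n₃ : IsNorming φ₃ d₃ := ⟨hφ₃n, hφ₃x⟩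
  obtain ⟨ε₃, hε₃, W₃⟩ := wedge_scaled hdim h₃ f₃ n₃
  have e₃0 : a₃ = φ₃ w₃ := by simpa using W₃ 0 (by simp; positivity)
  have hφ₃d₁le : φ₃ d₁ ≤ 1 := by
    have := phi_le hφ₃n d₁; rwa [hd₁u] at this
  have hφ₃d₁ge : -1 ≤ φ₃ d₁ := by
    have := phi_le hφ₃n (-d₁); rw [norm_neg, hd₁u, map_neg] at this; linarith
  rcases hd₁₂ with heq | hanti
  · -- d₂ = d₁ : impossible
    exfalso
    set δ := min (min a₁ a₂) ε₃ with hδdef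
    have hδ : 0 < δ := lt_min (lt_min ha₁ ha₂) hε₃
    have key : ∀ s : ℝ, |s| ≤ δ → 0 ≤ s * (2 + φ₃ d₁) := by
      intro s hs
      have hsabs := abs_le.1 hs
      have hsa₁ : |s| ≤ a₁ := le_trans hs (le_trans (min_le_left _ _) (min_le_left _ _))
      have hsa₂ : |s| ≤ a₂ := le_trans hs (le_trans (min_le_left _ _) (min_le_right _ _))
      have hsε₃ : |s| ≤ ε₃ := le_trans hs (min_le_right _ _)
      have k₁ : ‖w₁ + s • d₁‖ = a₁ + s := by
        conv_lhs => rw [hw₁d]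
        rw [← add_smul, norm_smul, Real.norm_eq_abs, hd₁u, mul_one,
          abs_of_nonneg (by linarith [(abs_le.1 hsa₁).1])]
      have k₂ : ‖w₂ + s • d₁‖ = a₂ + s := by
        conv_lhs => rw [hw₂d, heq]
        rw [← add_smul, norm_smul, Real.norm_eq_abs, hd₁u, mul_one,
          abs_of_nonneg (by linarith [(abs_le.1 hsa₂).1])]
      have k₃ : ‖w₃ + s • d₁‖ = φ₃ (w₃ + s • d₁) := by
        apply W₃
        rw [norm_smul, Real.norm_eq_abs, hd₁u, mul_one]
        exact hsε₃
      have := Hmin (s • d₁)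
      rw [k₁, k₂, k₃, map_add, map_smul, smul_eq_mul, ← e₃0] at this
      linarith
    have k1 := key δ (by rw [abs_of_pos hδ])
    have k2 := key (-δ) (by rw [abs_neg, abs_of_pos hδ])
    nlinarith
  · -- d₂ = -d₁ : main construction
    -- φ₃ vanishes on d₁
    have hφ₃d₁ : φ₃ d₁ = 0 := by
      set δ := min (min a₁ a₂) ε₃ with hδdef
      have hδ : 0 < δ := lt_min (lt_min ha₁ ha₂) hε₃
      have key : ∀ s : ℝ, |s| ≤ δ → 0 ≤ s * φ₃ d₁ := by
        intro s hs
        have hsa₁ : |s| ≤ a₁ := le_trans hs (le_trans (min_le_left _ _) (min_le_left _ _))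
        have hsa₂ : |s| ≤ a₂ := le_trans hs (le_trans (min_le_left _ _) (min_le_right _ _))
        have hsε₃ : |s| ≤ ε₃ := le_trans hs (min_le_right _ _)
        have k₁ : ‖w₁ + s • d₁‖ = a₁ + s := by
          conv_lhs => rw [hw₁d]
          rw [← add_smul, norm_smul, Real.norm_eq_abs, hd₁u, mul_one,
            abs_of_nonneg (by linarith [(abs_le.1 hsa₁).1])]
        have k₂ : ‖w₂ + s • d₁‖ = a₂ - s := by
          conv_lhs => rw [hw₂d, hanti]
          have hrw : a₂ • -d₁ + s • d₁ = (s - a₂) • d₁ := by module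
          rw [hrw, norm_smul, Real.norm_eq_abs, hd₁u, mul_one,
            abs_of_nonpos (by linarith [(abs_le.1 hsa₂).2])]
          ring
        have k₃ : ‖w₃ + s • d₁‖ = φ₃ (w₃ + s • d₁) := by
          apply W₃
          rw [norm_smul, Real.norm_eq_abs, hd₁u, mul_one]
          exact hsε₃
        have := Hmin (s • d₁)
        rw [k₁, k₂, k₃, map_add, map_smul, smul_eq_mul, ← e₃0] at this
        linarith
      have k1 := key δ (by rw [abs_of_pos hδ])
      have k2 := key (-δ) (by rw [abs_neg, abs_of_pos hδ])
      nlinarith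
    -- select z₀ independent from d₁ among the endpoints of the flat of d₃
    obtain ⟨u, v, huv, hu, hv, hopen, hseg⟩ := f₃.2
    have hLIuv := flat_indep huv hu hv hseg
    have hz₀sel : ∃ z₀ : X, ∀ s t : ℝ, s • d₁ + t • z₀ = 0 → s = 0 ∧ t = 0 := by
      by_cases hcase : ∀ s t : ℝ, s • d₁ + t • u = 0 → s = 0 ∧ t = 0
      · exact ⟨u, hcase⟩
      · obtain ⟨cu, hcu, hd₁equ⟩ := dep_pair (unit_ne_zero hd₁u) (unit_ne_zero hu) hcase
        refine ⟨v, ?_⟩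
        intro s t hst
        rw [hd₁equ, smul_smul] at hst
        have := hLIuv (s * cu) t hst
        have hs0 : s = 0 := by
          rcases mul_eq_zero.1 this.1 with h' | h'
          · exact h'
          · exact absurd h' hcu
        exact ⟨hs0, this.2⟩
    obtain ⟨z₀, hz₀⟩ := hz₀sel
    -- norming functional of d₁ as a lower bound witness
    obtain ⟨φ₀, hφ₀n, hφ₀x⟩ := exists_dual_vector ℝ d₁ (norm_ne_zero_iff.2 (unit_ne_zero hd₁u))
    have hφ₀d₁ : φ₀ d₁ = 1 := by rw [hφ₀x, hd₁u]; norm_num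
    set Q : X → ℝ → ℝ := fun z t => (‖d₁ + t • z‖ - 1) / t with hQdef
    set H : X → ℝ := fun z => sInf (Q z '' Set.Ioi 0) with hHdef
    have hQlb : ∀ (z : X) (t : ℝ), 0 < t → φ₀ z ≤ Q z t := by
      intro z t ht
      have h1 : φ₀ (d₁ + t • z) ≤ ‖d₁ + t • z‖ := phi_le hφ₀n _
      have h2 : φ₀ d₁ + t * φ₀ z ≤ ‖d₁ + t • z‖ := by
        simpa [map_add, map_smul] using h1
      rw [hφ₀d₁] at h2
      show φ₀ z ≤ (‖d₁ + t • z‖ - 1) / t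
      rw [le_div_iff₀ ht]
      linarith
    have hbddB : ∀ z : X, BddBelow (Q z '' Set.Ioi 0) := by
      intro z
      refine ⟨φ₀ z, ?_⟩
      rintro q ⟨t, ht, rfl⟩
      exact hQlb z t ht
    have hneS : ∀ z : X, (Q z '' Set.Ioi 0).Nonempty :=
      fun z => ⟨Q z 1, ⟨1, by norm_num, rfl⟩⟩
    have hHleQ : ∀ (z : X) (t : ℝ), 0 < t → H z ≤ Q z t := by
      intro z t ht
      exact csInf_le (hbddB z) ⟨t, ht, rfl⟩
    -- the central inequality coming from minimality
    have first : ∀ (z : X) (t₁ t₂ : ℝ), 0 < t₁ → 0 < t₂ →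
        -(φ₃ z) ≤ Q z t₁ + Q (-z) t₂ := by
      intro z t₁ t₂ ht₁ ht₂
      set s := min (min (a₁ * t₁) (a₂ * t₂)) (ε₃ / (‖z‖ + 1)) with hsdef
      have hzpos : (0:ℝ) < ‖z‖ + 1 := by positivity
      have hspos : 0 < s := by
        apply lt_min (lt_min (by positivity) (by positivity))
        positivity
      have hs₁ : s / a₁ ≤ t₁ := by
        rw [div_le_iff₀ ha₁, mul_comm]
        exact le_trans (min_le_left _ _) (min_le_left _ _)
      have hs₂ : s / a₂ ≤ t₂ := by
        rw [div_le_iff₀ ha₂, mul_comm]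
        exact le_trans (min_le_left _ _) (min_le_right _ _)
      have hsz : ‖s • z‖ ≤ ε₃ := by
        rw [norm_smul, Real.norm_of_nonneg hspos.le]
        have h1 : s ≤ ε₃ / (‖z‖ + 1) := min_le_right _ _
        calc s * ‖z‖ ≤ (ε₃ / (‖z‖ + 1)) * ‖z‖ :=
          mul_le_mul_of_nonneg_right h1 (norm_nonneg z)
        _ ≤ (ε₃ / (‖z‖ + 1)) * (‖z‖ + 1) := by
            apply mul_le_mul_of_nonneg_left (by linarith) (by positivity)
        _ = ε₃ := by field_simp
      have hcoef₁ : a₁ * (s / a₁) = s := by field_simp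
      have hcoef₂ : a₂ * (s / a₂) = s := by field_simp
      have k₁ : ‖w₁ + s • z‖ = a₁ * ‖d₁ + (s / a₁) • z‖ := by
        have hvec : a₁ • (d₁ + (s / a₁) • z) = w₁ + s • z := by
          rw [hw₁d]
          match_scalars <;> field_simp
        rw [← hvec, norm_smul_of_nonneg ha₁.le]
      have k₂ : ‖w₂ + s • z‖ = a₂ * ‖d₁ + (s / a₂) • (-z)‖ := by
        have hvec : a₂ • (d₁ + (s / a₂) • (-z)) = -(w₂ + s • z) := by
          rw [hw₂d, hanti]
          match_scalars <;> field_simp <;> ring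
        rw [← norm_neg (w₂ + s • z), ← hvec, norm_smul_of_nonneg ha₂.le]
      have k₃ : ‖w₃ + s • z‖ = φ₃ (w₃ + s • z) := W₃ _ hsz
      have hQ1 : Q z (s / a₁) ≤ Q z t₁ := Q_mono hd₁u (by positivity) hs₁
      have hQ2 : Q (-z) (s / a₂) ≤ Q (-z) t₂ := Q_mono hd₁u (by positivity) hs₂
      have hmin := Hmin (s • z)
      rw [k₁, k₂, k₃, map_add, map_smul, smul_eq_mul, ← e₃0] at hmin
      have hq : ∀ (zz : X) (tt : ℝ), 0 < tt → 1 + tt * Q zz tt = ‖d₁ + tt • zz‖ := by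
        intro zz tt htt
        show 1 + tt * ((‖d₁ + tt • zz‖ - 1) / tt) = _
        field_simp; ring
      rw [← hq z (s / a₁) (by positivity), ← hq (-z) (s / a₂) (by positivity)] at hmin
      have hexp₁ : a₁ * (1 + s / a₁ * Q z (s / a₁)) = a₁ + s * Q z (s / a₁) := by
        field_simp
      have hexp₂ : a₂ * (1 + s / a₂ * Q (-z) (s / a₂)) = a₂ + s * Q (-z) (s / a₂) := by
        field_simp
      rw [hexp₁, hexp₂] at hmin
      have hstep : -(φ₃ z) ≤ Q z (s / a₁) + Q (-z) (s / a₂) := by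
        have h0 : 0 ≤ s * (Q z (s / a₁) + Q (-z) (s / a₂) + φ₃ z) := by nlinarith
        nlinarith
      linarith
    have Hsum : ∀ z : X, -(φ₃ z) ≤ H z + H (-z) := by
      intro z
      have step : ∀ t₂ : ℝ, 0 < t₂ → -(φ₃ z) - Q (-z) t₂ ≤ H z := by
        intro t₂ ht₂
        apply le_csInf (hneS z)
        rintro q ⟨t₁, ht₁, rfl⟩
        linarith [first z t₁ t₂ ht₁ ht₂]
      have step2 : -(φ₃ z) - H z ≤ H (-z) := by
        apply le_csInf (hneS (-z))
        rintro q ⟨t₂, ht₂, rfl⟩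
        linarith [step t₂ ht₂]
      linarith
    have HsumZ := Hsum z₀
    have HsumZ' : φ₃ z₀ ≤ H (-z₀) + H z₀ := by
      have := Hsum (-z₀)
      rwa [map_neg, neg_neg, neg_neg] at this
    -- construct the two functionals
    obtain ⟨b₀, b₁, hbdec, hb00, hb01, hb10, hb11⟩ := coord_pair hdim hz₀
    set c : ℝ := (H z₀ - H (-z₀) - φ₃ z₀) / 2 with hcdef
    set χ₁ : X →L[ℝ] ℝ := b₀ + c • b₁ with hχ₁def
    have hχ₁app : ∀ y : X, χ₁ y = b₀ y + c * b₁ y := by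
      intro y
      rw [hχ₁def]
      simp
    have hχ₁d₁ : χ₁ d₁ = 1 := by rw [hχ₁app, hb00, hb10]; ring
    have hχ₁z₀ : χ₁ z₀ = c := by rw [hχ₁app, hb01, hb11]; ring
    have hχ₁n : ‖χ₁‖ = 1 := by
      apply Nlemma hdim hd₁u hz₀ hχ₁d₁
      · intro t ht
        rw [hχ₁z₀]
        calc c ≤ H z₀ := by rw [hcdef]; linarith
        _ ≤ Q z₀ t := hHleQ z₀ t ht
      · intro t ht
        rw [hχ₁z₀]
        calc -c ≤ H (-z₀) := by rw [hcdef]; linarith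
        _ ≤ Q (-z₀) t := hHleQ (-z₀) t ht
    have n₁' : IsNorming χ₁ d₁ := ⟨hχ₁n, by rw [hd₁u]; exact hχ₁d₁⟩
    set χ₂ : X →L[ℝ] ℝ := -φ₃ - χ₁ with hχ₂def
    have hχ₂app : ∀ y : X, χ₂ y = -(φ₃ y) - χ₁ y := by
      intro y
      rw [hχ₂def]
      simp
    have hχ₂d₂ : χ₂ d₂ = 1 := by
      rw [hanti, hχ₂app, map_neg, map_neg, hφ₃d₁, hχ₁d₁]
      ring
    have hχ₂n : ‖χ₂‖ = 1 := by
      have hneg : ‖-χ₂‖ = 1 := by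
        apply Nlemma hdim hd₁u hz₀
        · show (-χ₂) d₁ = 1
          rw [ContinuousLinearMap.neg_apply, hχ₂app, hφ₃d₁, hχ₁d₁]
          ring
        · intro t ht
          have happ : (-χ₂) z₀ = φ₃ z₀ + c := by
            rw [ContinuousLinearMap.neg_apply, hχ₂app, hχ₁z₀]
            ring
          rw [happ]
          calc φ₃ z₀ + c ≤ H z₀ := by rw [hcdef]; linarith
          _ ≤ Q z₀ t := hHleQ z₀ t ht
        · intro t ht
          have happ : (-χ₂) z₀ = φ₃ z₀ + c := by
            rw [ContinuousLinearMap.neg_apply, hχ₂app, hχ₁z₀]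
            ring
          rw [happ]
          calc -(φ₃ z₀ + c) ≤ H (-z₀) := by rw [hcdef]; linarith
          _ ≤ Q (-z₀) t := hHleQ (-z₀) t ht
      rwa [norm_neg] at hneg
    have n₂' : IsNorming χ₂ d₂ := ⟨hχ₂n, by rw [hd₂u]; exact hχ₂d₂⟩
    have hsum : χ₁ + χ₂ + φ₃ = 0 := by
      rw [hχ₂def]
      abel
    -- final case analysis on the faces
    by_cases hf₁ : ∀ y : X, ‖y‖ = 1 → χ₁ y = 1 → y = d₁
    · by_cases hf₂ : ∀ y : X, ‖y‖ = 1 → χ₂ y = 1 → y = d₂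
      · right; right
        exact ⟨d₁, d₂, d₃, χ₁, χ₂, φ₃, ⟨hd₁u, z₁⟩, ⟨hd₂u, z₂⟩, hanti, f₃,
          n₁', n₂', n₃, hsum, hf₁, hf₂⟩
      · right; left
        push_neg at hf₂
        obtain ⟨y, hyu, hχy, hyne⟩ := hf₂
        have hmid := face_mid hχ₂n hd₂u hχ₂d₂ hyu hχy (Ne.symm hyne)
        refine ⟨_, d₃, d₁, χ₂, φ₃, χ₁, hmid.1, f₃, ⟨hd₁u, z₁⟩,
          hmid.2, n₃, n₁', ?_, hf₁⟩
        rw [hχ₂def]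
        abel
    · push_neg at hf₁
      obtain ⟨y, hyu, hχy, hyne⟩ := hf₁
      have hmid := face_mid hχ₁n hd₁u hχ₁d₁ hyu hχy (Ne.symm hyne)
      by_cases hf₂ : ∀ y : X, ‖y‖ = 1 → χ₂ y = 1 → y = d₂
      · right; left
        refine ⟨_, d₃, d₂, χ₁, φ₃, χ₂, hmid.1, f₃, ⟨hd₂u, z₂⟩,
          hmid.2, n₃, n₂', ?_, hf₂⟩
        rw [hχ₂def]
        abel
      · left
        push_neg at hf₂
        obtain ⟨y₂, hy₂u, hχy₂, hy₂ne⟩ := hf₂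
        have hmid₂ := face_mid hχ₂n hd₂u hχ₂d₂ hy₂u hχy₂ (Ne.symm hy₂ne)
        exact ⟨_, _, d₃, χ₁, χ₂, φ₃, hmid.1, hmid₂.1, f₃,
          hmid.2, hmid₂.2, n₃, hsum⟩


lemma ft_nonempty (hdim : finrank ℝ X = 2) (x₁ x₂ x₃ : X) :
    ∃ p : X, p ∈ ftSet ![x₁, x₂, x₃] := by
  haveI : FiniteDimensional ℝ X := FiniteDimensional.of_finrank_eq_succ hdim
  haveI : ProperSpace X := FiniteDimensional.proper ℝ X
  set f : X → ℝ := fun q => ‖q - x₁‖ + ‖q - x₂‖ + ‖q - x₃‖ with hf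
  have hcont : Continuous f := by fun_prop
  set S := ‖x₁‖ + ‖x₂‖ + ‖x₃‖ with hS
  have hS0 : 0 ≤ S := by positivity
  have h0mem : (0 : X) ∈ Metric.closedBall (0 : X) (S + 1) :=
    Metric.mem_closedBall_self (by linarith)
  obtain ⟨p, hpK, hpmin⟩ := (isCompact_closedBall (0 : X) (S + 1)).exists_isMinOn
    ⟨0, h0mem⟩ hcont.continuousOn
  have hmin : ∀ q ∈ Metric.closedBall (0 : X) (S + 1), f p ≤ f q := fun q hq =>
    isMinOn_iff.1 hpmin q hq
  have hf0 : f 0 = S := by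
    rw [hf]
    simp [hS]
  refine ⟨p, ?_⟩
  rw [mem_ft_iff]
  intro q
  have hfp : f p = ‖p - x₁‖ + ‖p - x₂‖ + ‖p - x₃‖ := rfl
  have hfq : f q = ‖q - x₁‖ + ‖q - x₂‖ + ‖q - x₃‖ := rfl
  rw [← hfp, ← hfq]
  by_cases hq : q ∈ Metric.closedBall (0 : X) (S + 1)
  · exact hmin q hq
  · have hq' : S + 1 < ‖q‖ := by
      rw [Metric.mem_closedBall, dist_zero_right, not_le] at hq
      exact hq
    have h1 : f p ≤ S := by
      have := hmin 0 h0mem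
      rwa [hf0] at this
    have h2 : ∀ y : X, ‖q‖ - ‖y‖ ≤ ‖q - y‖ := fun y => norm_sub_norm_le q y
    have := h2 x₁
    have := h2 x₂
    have := h2 x₃
    have hfq' : 3 * ‖q‖ - S ≤ f q := by
      rw [hfq, hS]
      linarith [h2 x₁, h2 x₂, h2 x₃]
    have : f p ≤ f q := by linarith
    exact this


end AuxiliaryLemmas

/-- Uniqueness criterion: in a normed plane the Fermat–Torricelli set is a singleton for
every triple of points if and only if none of the three non-uniqueness conditions holds. -/
theorem ft_singleton_iff_no_nonuniqueness_condition
    {X : Type*} [NormedAddCommGroup X] [NormedSpace ℝ X]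
    (hdim : Module.finrank ℝ X = 2) :
    (∀ x₁ x₂ x₃ : X, ∃ p : X, ftSet ![x₁, x₂, x₃] = {p}) ↔
      (¬ FirstCondition X ∧ ¬ SecondCondition X ∧ ¬ ThirdCondition X) := by
  constructor
  · intro huniq
    exact ⟨not_firstCondition hdim huniq, not_secondCondition hdim huniq,
      not_thirdCondition hdim huniq⟩
  · rintro ⟨hC1, hC2, hC3⟩ x₁ x₂ x₃
    by_contra hns
    obtain ⟨p₀, hp₀⟩ := ft_nonempty hdim x₁ x₂ x₃
    have hq : ∃ q ∈ ftSet ![x₁, x₂, x₃], q ≠ p₀ := by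
      by_contra h
      push_neg at h
      exact hns ⟨p₀, Set.eq_singleton_iff_unique_mem.2 ⟨hp₀, fun q hq => h q hq⟩⟩
    obtain ⟨q, hq, hqne⟩ := hq
    -- midpoint setup
    set m : X := (1/2 : ℝ) • (p₀ + q) with hm
    set d : X := (1/2 : ℝ) • (q - p₀) with hd
    have hd0 : d ≠ 0 := by
      intro h
      rw [hd, smul_eq_zero] at h
      rcases h with h | h
      · norm_num at h
      · exact hqne (by rwa [sub_eq_zero] at h)
    set w₁ : X := m - x₁ with hw₁
    set w₂ : X := m - x₂ with hw₂
    set w₃ : X := m - x₃ with hw₃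
    have hmd₁ : ∀ x : X, (m - x) - d = p₀ - x := by
      intro x; rw [hm, hd]; module
    have hmd₂ : ∀ x : X, (m - x) + d = q - x := by
      intro x; rw [hm, hd]; module
    have hp₀m := mem_ft_iff.1 hp₀
    have hqm := mem_ft_iff.1 hq
    have hpq : ‖p₀ - x₁‖ + ‖p₀ - x₂‖ + ‖p₀ - x₃‖ = ‖q - x₁‖ + ‖q - x₂‖ + ‖q - x₃‖ :=
      le_antisymm (hp₀m q) (hqm p₀)
    -- midpoint inequalities
    have hmle : ∀ x : X, ‖m - x‖ ≤ (‖p₀ - x‖ + ‖q - x‖) / 2 := by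
      intro x
      have hkey : m - x = (1/2 : ℝ) • ((p₀ - x) + (q - x)) := by
        rw [hm]; module
      rw [hkey, norm_smul]
      rw [Real.norm_of_nonneg (by norm_num : (0:ℝ) ≤ 1/2)]
      have := norm_add_le (p₀ - x) (q - x)
      linarith
    have hFm : ‖p₀ - x₁‖ + ‖p₀ - x₂‖ + ‖p₀ - x₃‖ ≤ ‖m - x₁‖ + ‖m - x₂‖ + ‖m - x₃‖ :=
      hp₀m m
    have he₁ : ‖m - x₁‖ = (‖p₀ - x₁‖ + ‖q - x₁‖) / 2 := by
      have := hmle x₁; have := hmle x₂; have := hmle x₃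
      linarith
    have he₂ : ‖m - x₂‖ = (‖p₀ - x₂‖ + ‖q - x₂‖) / 2 := by
      have := hmle x₁; have := hmle x₂; have := hmle x₃
      linarith
    have he₃ : ‖m - x₃‖ = (‖p₀ - x₃‖ + ‖q - x₃‖) / 2 := by
      have := hmle x₁; have := hmle x₂; have := hmle x₃
      linarith
    -- triangle equalities
    have heq : ∀ x : X, ‖m - x‖ = (‖p₀ - x‖ + ‖q - x‖) / 2 →
        ‖(m - x) - d‖ + ‖(m - x) + d‖ = 2 * ‖m - x‖ := by
      intro x hx
      rw [hmd₁ x, hmd₂ x, hx]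
      ring
    have heq₁ : ‖w₁ - d‖ + ‖w₁ + d‖ = 2 * ‖w₁‖ := heq x₁ he₁
    have heq₂ : ‖w₂ - d‖ + ‖w₂ + d‖ = 2 * ‖w₂‖ := heq x₂ he₂
    have heq₃ : ‖w₃ - d‖ + ‖w₃ + d‖ = 2 * ‖w₃‖ := heq x₃ he₃
    -- nonvanishing
    have hwne : ∀ x : X, ‖m - x‖ = (‖p₀ - x‖ + ‖q - x‖) / 2 → m - x ≠ 0 := by
      intro x hx h0
      rw [h0, norm_zero] at hx
      have h1 : ‖p₀ - x‖ = ‖d‖ := by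
        have := hmd₁ x
        rw [h0, zero_sub] at this
        rw [← this, norm_neg]
      have h2 : ‖q - x‖ = ‖d‖ := by
        have := hmd₂ x
        rw [h0, zero_add] at this
        rw [← this]
      rw [h1, h2] at hx
      have : ‖d‖ = 0 := by linarith
      exact hd0 (norm_eq_zero.1 this)
    have h₁ : w₁ ≠ 0 := hwne x₁ he₁
    have h₂ : w₂ ≠ 0 := hwne x₂ he₂
    have h₃ : w₃ ≠ 0 := hwne x₃ he₃
    -- m is a minimizer
    have hFmeq : ‖m - x₁‖ + ‖m - x₂‖ + ‖m - x₃‖ =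
        ‖p₀ - x₁‖ + ‖p₀ - x₂‖ + ‖p₀ - x₃‖ := by
      rw [he₁, he₂, he₃]
      linarith
    have Hmin : ∀ h : X, ‖w₁‖ + ‖w₂‖ + ‖w₃‖ ≤ ‖w₁ + h‖ + ‖w₂ + h‖ + ‖w₃ + h‖ := by
      intro h
      have hrw : ∀ x : X, (m - x) + h = (m + h) - x := by intro x; module
      rw [hw₁, hw₂, hw₃, hrw x₁, hrw x₂, hrw x₃, hFmeq]
      exact hp₀m (m + h)
    -- classification
    have hclass : ∀ w : X, w ≠ 0 → (‖w - d‖ + ‖w + d‖ = 2 * ‖w‖) →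
        FirstType (‖w‖⁻¹ • w) ∨
          (¬ FirstType (‖w‖⁻¹ • w) ∧ ∃ r : ℝ, r ≠ 0 ∧ w = r • d) := by
      intro w hw hweq
      by_cases hft : FirstType (‖w‖⁻¹ • w)
      · exact Or.inl hft
      · refine Or.inr ⟨hft, ?_⟩
        by_cases hind : ∀ s t : ℝ, s • w + t • d = 0 → s = 0 ∧ t = 0
        · exact absurd (triangle_eq_firstType hind hweq) hft
        · exact dep_pair hw hd0 hind
    have Hmin₁₃₂ : ∀ h : X, ‖w₁‖ + ‖w₃‖ + ‖w₂‖ ≤ ‖w₁ + h‖ + ‖w₃ + h‖ + ‖w₂ + h‖ :=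
      fun h => by linarith [Hmin h]
    have Hmin₂₃₁ : ∀ h : X, ‖w₂‖ + ‖w₃‖ + ‖w₁‖ ≤ ‖w₂ + h‖ + ‖w₃ + h‖ + ‖w₁ + h‖ :=
      fun h => by linarith [Hmin h]
    rcases hclass w₁ h₁ heq₁ with f₁ | ⟨z₁, r₁, hr₁, hp₁⟩ <;>
      rcases hclass w₂ h₂ heq₂ with f₂ | ⟨z₂, r₂, hr₂, hp₂⟩ <;>
      rcases hclass w₃ h₃ heq₃ with f₃ | ⟨z₃, r₃, hr₃, hp₃⟩
    · exact hC1 (caseL1 hdim h₁ h₂ h₃ Hmin f₁ f₂ f₃)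
    · rcases caseL2 hdim h₁ h₂ h₃ Hmin f₁ f₂ z₃ with h | h
      · exact hC1 h
      · exact hC2 h
    · rcases caseL2 hdim h₁ h₃ h₂ Hmin₁₃₂ f₁ f₃ z₂ with h | h
      · exact hC1 h
      · exact hC2 h
    · rcases caseL3 hdim hd0 h₂ h₃ h₁ Hmin₂₃₁ z₂ z₃ f₁ hp₂ hp₃ with h | h | h
      · exact hC1 h
      · exact hC2 h
      · exact hC3 h
    · rcases caseL2 hdim h₂ h₃ h₁ Hmin₂₃₁ f₂ f₃ z₁ with h | h
      · exact hC1 h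
      · exact hC2 h
    · rcases caseL3 hdim hd0 h₁ h₃ h₂ Hmin₁₃₂ z₁ z₃ f₂ hp₁ hp₃ with h | h | h
      · exact hC1 h
      · exact hC2 h
      · exact hC3 h
    · rcases caseL3 hdim hd0 h₁ h₂ h₃ Hmin z₁ z₂ f₃ hp₁ hp₂ with h | h | h
      · exact hC1 h
      · exact hC2 h
      · exact hC3 h
    · exact caseL0 hd0 Hmin hr₁ hr₂ hr₃ hp₁ hp₂ hp₃
end

section
/- Let λ ≥ 2 be an integer with λ not divisible by 3, and let X be a λ-normed plane. Then X does not satisfy the first non-uniqueness condition: there do not exist unit vectors x₁, x₂, x₃ in X, each of the first type, together with norming functionals φ₁, φ₂, φ₃ for x₁, x₂, x₃ satisfying φ₁ + φ₂ + φ₃ = 0. -/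
open Real

/-- The vertices of a regular 2λ-gon centered at the origin, with circumradius r and
initial angle θ. -/
noncomputable def polyVerts (lam : ℕ) (r θ : ℝ) : Fin (2 * lam) → ℝ × ℝ :=
  fun k => (r * Real.cos (θ + (k : ℕ) * π / lam), r * Real.sin (θ + (k : ℕ) * π / lam))

/-- N : ℝ² → ℝ is a norm. -/
def IsNormOn (N : ℝ × ℝ → ℝ) : Prop :=
  (∀ x y : ℝ × ℝ, N (x + y) ≤ N x + N y) ∧
  (∀ (c : ℝ) (x : ℝ × ℝ), N (c • x) = |c| * N x) ∧
  (∀ x : ℝ × ℝ, N x = 0 → x = 0)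

/-- N is a λ-plane norm: a norm on ℝ² whose closed unit ball is a regular 2λ-gon
centered at the origin. -/
def IsLambdaNorm (lam : ℕ) (N : ℝ × ℝ → ℝ) : Prop :=
  IsNormOn N ∧ ∃ r > (0 : ℝ), ∃ θ : ℝ,
    {x : ℝ × ℝ | N x ≤ 1} = convexHull ℝ (Set.range (polyVerts lam r θ))

/-- φ is a norming functional for x with respect to the norm N: the dual norm of φ is
at most one (‖φ‖ ≤ 1, which together with φ x = N x = 1 for the unit vectors considered
gives ‖φ‖ = 1) and φ x = N x. -/
def IsNormingN (N : ℝ × ℝ → ℝ) (φ : (ℝ × ℝ) →ₗ[ℝ] ℝ) (x : ℝ × ℝ) : Prop :=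
  (∀ y : ℝ × ℝ, |φ y| ≤ N y) ∧ φ x = N x

/-- A unit vector (w.r.t. N) of the first type: an interior point of a flattening of the
unit circle of N. -/
def FirstTypeN (N : ℝ × ℝ → ℝ) (x : ℝ × ℝ) : Prop :=
  N x = 1 ∧ ∃ u v : ℝ × ℝ, u ≠ v ∧ N u = 1 ∧ N v = 1 ∧
    x ∈ openSegment ℝ u v ∧ ∀ z ∈ segment ℝ u v, N z = 1

/-- A unit vector (w.r.t. N) of the zero type: not of the first type. -/
def ZeroTypeN (N : ℝ × ℝ → ℝ) (x : ℝ × ℝ) : Prop :=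
  N x = 1 ∧ ¬ FirstTypeN N x

/-- The Fermat–Torricelli set of a finite tuple of points of ℝ² with respect to the
norm N. -/
def ftSetN (N : ℝ × ℝ → ℝ) {n : ℕ} (x : Fin n → ℝ × ℝ) : Set (ℝ × ℝ) :=
  {p | ∀ q : ℝ × ℝ, ∑ i, N (p - x i) ≤ ∑ i, N (q - x i)}


/-! ### Auxiliary lemmas -/

set_option maxHeartbeats 1000000 in
lemma lin_apply (φ : (ℝ × ℝ) →ₗ[ℝ] ℝ) (p : ℝ × ℝ) :
    φ p = p.1 * φ (1, 0) + p.2 * φ (0, 1) := by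
  have h : φ (p.1 • ((1:ℝ), (0:ℝ)) + p.2 • ((0:ℝ), (1:ℝ)))
      = p.1 * φ (1, 0) + p.2 * φ (0, 1) := by
    rw [map_add, map_smul, map_smul]; simp
  rw [← h]; congr 1
  ext <;> simp

lemma exists_polar (a b : ℝ) (h : ¬ (a = 0 ∧ b = 0)) :
    ∃ s δ : ℝ, 0 < s ∧ a = s * Real.cos δ ∧ b = -(s * Real.sin δ) ∧
      ∀ α : ℝ, a * Real.cos α + b * Real.sin α = s * Real.cos (δ + α) := by
  set c : ℂ := ⟨a, -b⟩ with hc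
  have hc0 : c ≠ 0 := by
    simp only [Complex.ext_iff, hc, Complex.zero_re, Complex.zero_im, ne_eq]
    intro hh
    exact h ⟨hh.1, by linarith [hh.2]⟩
  refine ⟨‖c‖, c.arg, norm_pos_iff.mpr hc0, ?_, ?_, ?_⟩
  · rw [Complex.cos_arg hc0]
    have : ‖c‖ ≠ 0 := (norm_pos_iff.mpr hc0).ne'
    field_simp
    simp [hc]
  · rw [Complex.sin_arg]
    have : ‖c‖ ≠ 0 := (norm_pos_iff.mpr hc0).ne'
    field_simp [hc]
    simp [hc]
  · intro α
    have h1 : a = ‖c‖ * Real.cos c.arg := by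
      rw [Complex.cos_arg hc0]
      have : ‖c‖ ≠ 0 := (norm_pos_iff.mpr hc0).ne'
      field_simp
      simp [hc]
    have h2 : b = -(‖c‖ * Real.sin c.arg) := by
      rw [Complex.sin_arg]
      have : ‖c‖ ≠ 0 := (norm_pos_iff.mpr hc0).ne'
      field_simp [hc]
      simp [hc]
    rw [Real.cos_add, h1, h2]; ring

set_option maxHeartbeats 1000000 in
lemma trig_key (lam : ℕ) (hlam : 2 ≤ lam) (s C : ℝ) (hC : 0 < C) (hs : 0 ≤ s) (β : ℝ)
    (j k : ℤ) (hjk : ¬ ((2 * (lam:ℤ)) ∣ (j - k)))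
    (hj : s * Real.cos (β + j * (π / lam)) = C)
    (hk : s * Real.cos (β + k * (π / lam)) = C)
    (hle : ∀ m : ℤ, s * Real.cos (β + m * (π / lam)) ≤ C) :
    s * Real.cos (π / (2 * lam)) = C ∧
      ∃ (t : ℤ) (ε : ℝ), (ε = 1 ∨ ε = -1) ∧
        β + j * (π / lam) = 2 * π * t + ε * (π / (2 * lam)) := by
  have hlpos : (0:ℝ) < lam := by exact_mod_cast (by omega : 0 < lam)
  have hl0 : (lam:ℝ) ≠ 0 := hlpos.ne'
  have hπ : (0:ℝ) < π := Real.pi_pos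
  have hspos : 0 < s := by
    rcases eq_or_lt_of_le hs with h | h
    · exfalso; rw [← h] at hj; simp at hj; linarith
    · exact h
  set A := β + j * (π / lam) with hA
  set B := β + k * (π / lam) with hB
  have hcosAB : Real.cos A = Real.cos B := by
    have := hj.trans hk.symm
    exact (mul_right_inj' hspos.ne').mp this
  -- cos A - cos B = 0
  have hzero : Real.sin ((A + B) / 2) * Real.sin ((A - B) / 2) = 0 := by
    have h := Real.cos_sub_cos A B
    rw [hcosAB, sub_self] at h
    have := h.symm
    nlinarith [this]
  rcases mul_eq_zero.mp hzero with hcase | hcase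
  swap
  · -- sin ((A-B)/2) = 0 : leads to 2λ ∣ j - k, contradiction
    exfalso
    obtain ⟨n, hn⟩ := Real.sin_eq_zero_iff.mp hcase
    have : ((j:ℝ) - k) * (π / lam) = 2 * n * π := by
      have hAB : A - B = (j - k) * (π / lam) := by rw [hA, hB]; push_cast; ring
      rw [hAB] at hn
      linarith [hn]
    have hint : (j:ℝ) - k = 2 * n * lam := by
      field_simp at this
      nlinarith [this, hπ]
    have : j - k = 2 * n * lam := by exact_mod_cast hint
    exact hjk ⟨n, by linarith [this]⟩
  · -- main case
    obtain ⟨n, hn⟩ := Real.sin_eq_zero_iff.mp hcase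
    -- A = nπ + (j-k)π/(2λ)
    have hAval : A = n * π + ((j:ℝ) - k) * (π / (2 * lam)) := by
      have hABsum : A + B = 2 * (n * π) := by
        have h2 : A + B = 2 * ((A + B) / 2) := by ring
        rw [h2, ← hn]
      have hABdiff : A - B = ((j:ℝ) - k) * (π / lam) := by rw [hA, hB]; push_cast; ring
      have : A = (A + B) / 2 + (A - B) / 2 := by ring
      rw [this, hABsum, hABdiff]
      field_simp
    have hcosA : Real.cos A = C / s := by
      field_simp [← hj, hA]
      rw [← hj]; ring
    have hcosApos : 0 < Real.cos A := by rw [hcosA]; positivity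
    -- maximality: for all integers m, cos (A + m * (π/λ)) ≤ cos A
    have hmax : ∀ m : ℤ, Real.cos (A + m * (π / lam)) ≤ Real.cos A := by
      intro m
      have := hle (j + m)
      have harg : β + ((j:ℝ) + m) * (π / lam) = A + m * (π / lam) := by
        rw [hA]; push_cast; ring
      rw [show ((j + m : ℤ) : ℝ) = (j:ℝ) + m by push_cast; ring] at this
      rw [harg] at this
      rw [hcosA]
      rw [le_div_iff₀ hspos]
      linarith [this, hj]
    -- half-spacing bound
    have hl1 : (1:ℝ) ≤ lam := by exact_mod_cast (by omega : 1 ≤ lam)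
    have hhalf : π / (2 * lam) ≤ π := by
      rw [div_le_iff₀ (by positivity)]
      nlinarith [hπ, hl1]
    have hhalfpos : 0 < π / (2 * lam) := by positivity
    -- there is a lattice point within π/(2λ) of 0
    have hclose : Real.cos (π / (2 * lam)) ≤ Real.cos A := by
      obtain ⟨f, hround⟩ : ∃ f : ℤ, |A * lam / π - f| ≤ 1 / 2 :=
        ⟨round (A * lam / π), abs_sub_round _⟩
      have hxb : |A + -(f:ℝ) * (π / lam)| ≤ π / (2 * lam) := by
        have heq : A + -(f:ℝ) * (π / lam) = (A * lam / π - f) * (π / lam) := by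
          field_simp; ring
        rw [heq, abs_mul, abs_of_pos (by positivity : (0:ℝ) < π / lam)]
        calc |A * lam / π - f| * (π / lam) ≤ (1/2) * (π / lam) := by
              apply mul_le_mul_of_nonneg_right hround (by positivity)
          _ = π / (2 * lam) := by field_simp
      have h1 : Real.cos (π / (2 * lam)) ≤ Real.cos |A + -(f:ℝ) * (π / lam)| :=
        Real.cos_le_cos_of_nonneg_of_le_pi (abs_nonneg _) hhalf hxb
      rw [Real.cos_abs] at h1
      have h3 := hmax (-f)
      push_cast at h3
      exact h1.trans h3
    -- reduce A mod 2π
    obtain ⟨t, hround⟩ : ∃ t : ℤ, |A / (2 * π) - t| ≤ 1 / 2 :=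
      ⟨round (A / (2 * π)), abs_sub_round _⟩
    have hA0 : |A - 2 * π * t| ≤ π := by
      have heq : A - 2 * π * t = (A / (2 * π) - t) * (2 * π) := by field_simp
      rw [heq, abs_mul, abs_of_pos (by positivity : (0:ℝ) < 2 * π)]
      nlinarith [hround]
    have hcosA0 : Real.cos (A - 2 * π * t) = Real.cos A := by
      rw [show A - 2 * π * t = A + (-t : ℤ) * (2 * π) by push_cast; ring]
      exact Real.cos_add_int_mul_two_pi A (-t)
    have hA0small : |A - 2 * π * t| ≤ π / (2 * lam) := by
      by_contra hcon
      push_neg at hcon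
      have h2 : Real.cos |A - 2 * π * t| < Real.cos (π / (2 * lam)) :=
        Real.cos_lt_cos_of_nonneg_of_le_pi (by positivity) hA0 hcon
      rw [Real.cos_abs, hcosA0] at h2
      linarith [hclose]
    obtain ⟨q, hq⟩ : ∃ q : ℤ, q = 2 * lam * n + (j - k) - 4 * lam * t := ⟨_, rfl⟩
    have hqcast : (q:ℝ) = 2 * lam * n + ((j:ℝ) - k) - 4 * lam * t := by
      rw [hq]; push_cast; ring
    have hA0q : A - 2 * π * t = q * (π / (2 * lam)) := by
      rw [hAval, hqcast]
      field_simp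
      ring
    have hqabs : |q| ≤ 1 := by
      by_contra hcon
      push_neg at hcon
      have h2 : (2:ℤ) ≤ |q| := by omega
      have h2r : (2:ℝ) ≤ |(q:ℝ)| := by exact_mod_cast h2
      have h3 : (2:ℝ) * (π / (2 * lam)) ≤ |A - 2 * π * t| := by
        rw [hA0q, abs_mul, abs_of_pos hhalfpos]
        exact mul_le_mul_of_nonneg_right h2r (le_of_lt hhalfpos)
      linarith [hA0small, hhalfpos]
    have hqne : q ≠ 0 := by
      intro h0
      apply hjk
      refine ⟨-(n - 2 * t), ?_⟩
      rw [h0] at hq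
      have h5 : j - k = -(2 * lam * n) + 4 * lam * t := by linarith [hq]
      rw [h5]; ring
    have hq1 : q = 1 ∨ q = -1 := by
      obtain ⟨ha1, ha2⟩ := abs_le.mp hqabs
      omega
    have hAform : A = 2 * π * t + (q:ℝ) * (π / (2 * lam)) := by linarith [hA0q]
    have hcosval : Real.cos A = Real.cos (π / (2 * lam)) := by
      rw [hAform]
      rw [show 2 * π * (t:ℝ) + q * (π / (2 * lam)) = q * (π / (2 * lam)) + t * (2 * π) by ring]
      rw [Real.cos_add_int_mul_two_pi]
      rcases hq1 with h | h <;> rw [h]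
      · push_cast; ring_nf
      · push_cast
        rw [show (-1 : ℝ) * (π / (2 * lam)) = -(π / (2 * lam)) by ring, Real.cos_neg]
    constructor
    · rw [← hcosval]; exact hj
    · refine ⟨t, (q:ℝ), ?_, hAform⟩
      rcases hq1 with h | h
      · left; rw [h]; norm_num
      · right; rw [h]; norm_num

set_option maxHeartbeats 1000000 in
lemma div_three_of_cos (lam : ℕ) (hlam : 2 ≤ lam) (d : ℤ)
    (h : Real.cos (d * (π / lam)) = -(1/2)) : 3 ∣ lam := by
  have hlpos : (0:ℝ) < lam := by exact_mod_cast (by omega : 0 < lam)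
  have hl0 : (lam:ℝ) ≠ 0 := hlpos.ne'
  have hπ : (0:ℝ) < π := Real.pi_pos
  have hy : Real.cos (2 * π / 3) = -(1/2) := by
    have : (2:ℝ) * π / 3 = π - π / 3 := by ring
    rw [this, Real.cos_pi_sub, Real.cos_pi_div_three]
  set x := (d:ℝ) * (π / lam) with hx
  set y := (2:ℝ) * π / 3 with hyy
  have hzero : Real.sin ((x + y) / 2) * Real.sin ((x - y) / 2) = 0 := by
    have hc := Real.cos_sub_cos x y
    rw [h, hy, sub_self] at hc
    nlinarith [hc]
  have key : ∃ n : ℤ, x = 2 * n * π - y ∨ x = 2 * n * π + y := by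
    rcases mul_eq_zero.mp hzero with hcase | hcase
    · obtain ⟨n, hn⟩ := Real.sin_eq_zero_iff.mp hcase
      exact ⟨n, Or.inl (by linarith [hn])⟩
    · obtain ⟨n, hn⟩ := Real.sin_eq_zero_iff.mp hcase
      exact ⟨n, Or.inr (by linarith [hn])⟩
  obtain ⟨n, hcase⟩ := key
  -- in both cases 3d = 6nλ ∓ 2λ
  have hint : 3 * d = 6 * (n * (lam:ℤ)) - 2 * lam ∨ 3 * d = 6 * (n * (lam:ℤ)) + 2 * lam := by
    rcases hcase with hcc | hcc
    · left
      have hreal : 3 * (d:ℝ) = 6 * (n * (lam:ℝ)) - 2 * lam := by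
        rw [hx, hyy] at hcc
        field_simp at hcc
        nlinarith [hcc, hπ]
      exact_mod_cast hreal
    · right
      have hreal : 3 * (d:ℝ) = 6 * (n * (lam:ℝ)) + 2 * lam := by
        rw [hx, hyy] at hcc
        field_simp at hcc
        nlinarith [hcc, hπ]
      exact_mod_cast hreal
  obtain ⟨K, hK⟩ : ∃ K : ℤ, K = n * (lam:ℤ) := ⟨_, rfl⟩
  rw [← hK] at hint
  have : (3:ℤ) ∣ (lam:ℤ) := by omega
  exact_mod_cast this

set_option maxHeartbeats 1000000 in
lemma norming_form
    (lam : ℕ) (hlam : 2 ≤ lam) (N : ℝ × ℝ → ℝ)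
    (r : ℝ) (hr : 0 < r) (θ : ℝ)
    (hball : {x : ℝ × ℝ | N x ≤ 1} = convexHull ℝ (Set.range (polyVerts lam r θ)))
    (x : ℝ × ℝ) (φ : (ℝ × ℝ) →ₗ[ℝ] ℝ)
    (hx : FirstTypeN N x) (hφ : IsNormingN N φ x) :
    ∃ M : ℤ,
      φ (1, 0) = (1 / (r * Real.cos (π / (2 * (lam:ℝ))))) *
          Real.cos ((θ - π / (2 * (lam:ℝ))) + M * (π / lam)) ∧
      φ (0, 1) = (1 / (r * Real.cos (π / (2 * (lam:ℝ))))) *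
          Real.sin ((θ - π / (2 * (lam:ℝ))) + M * (π / lam)) := by
  obtain ⟨hx1, u, v, huv, hu, hv, hxseg, -⟩ := hx
  obtain ⟨hφle, hφx⟩ := hφ
  have hlpos : (0:ℝ) < lam := by exact_mod_cast (by omega : 0 < lam)
  have hl0 : (lam:ℝ) ≠ 0 := hlpos.ne'
  have hπ : (0:ℝ) < π := Real.pi_pos
  have hφx1 : φ x = 1 := by rw [hφx, hx1]
  -- φ u = φ v = 1
  have hφu_le : φ u ≤ 1 := by calc φ u ≤ |φ u| := le_abs_self _
                                   _ ≤ N u := hφle u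
                                   _ = 1 := hu
  have hφv_le : φ v ≤ 1 := by calc φ v ≤ |φ v| := le_abs_self _
                                   _ ≤ N v := hφle v
                                   _ = 1 := hv
  obtain ⟨ta, tb, hta, htb, htab, hxe⟩ := hxseg
  have hsum1 : ta * φ u + tb * φ v = 1 := by
    rw [← hφx1, ← hxe, map_add, map_smul, map_smul]; rfl
  have hφu : φ u = 1 := by nlinarith [hφu_le, hφv_le, hta, htb, htab, hsum1]
  have hφv : φ v = 1 := by nlinarith [hφu_le, hφv_le, hta, htb, htab, hsum1]
  -- the polygon as a Finset
  set P : Fin (2 * lam) → ℝ × ℝ := polyVerts lam r θ with hP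
  set verts : Finset (ℝ × ℝ) := Finset.image P Finset.univ with hverts
  have hcoe : (verts : Set (ℝ × ℝ)) = Set.range P := by
    rw [hverts, Finset.coe_image, Finset.coe_univ, Set.image_univ]
  have hballv : {x : ℝ × ℝ | N x ≤ 1} = convexHull ℝ (verts : Set (ℝ × ℝ)) := by
    rw [hcoe]; exact hball
  -- φ ≤ 1 on vertices
  have hφvert : ∀ y ∈ verts, φ y ≤ 1 := by
    intro y hy
    have hyhull : y ∈ convexHull ℝ (verts : Set (ℝ × ℝ)) :=
      subset_convexHull ℝ _ hy
    have hyN : N y ≤ 1 := by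
      have : y ∈ {x : ℝ × ℝ | N x ≤ 1} := by rw [hballv]; exact hyhull
      exact this
    calc φ y ≤ |φ y| := le_abs_self _
      _ ≤ N y := hφle y
      _ ≤ 1 := hyN
  -- weight decomposition of a unit vector whose φ-value is 1
  have hdecomp : ∀ z : ℝ × ℝ, N z = 1 → φ z = 1 →
      ∃ w : (ℝ × ℝ) → ℝ, (∀ y ∈ verts, 0 ≤ w y) ∧ (∑ y ∈ verts, w y) = 1 ∧
        (∑ y ∈ verts, w y • y) = z ∧ (∀ y ∈ verts, w y ≠ 0 → φ y = 1) := by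
    intro z hz1 hφz
    have hzhull : z ∈ convexHull ℝ (verts : Set (ℝ × ℝ)) := by
      rw [← hballv]; simp [hz1]
    obtain ⟨w, hw0, hw1, hwz⟩ := Finset.mem_convexHull'.mp hzhull
    refine ⟨w, hw0, hw1, hwz, ?_⟩
    intro y hy hwy
    by_contra hφy
    have hφylt : φ y < 1 := lt_of_le_of_ne (hφvert y hy) hφy
    have hwylt : 0 < w y := lt_of_le_of_ne (hw0 y hy) (Ne.symm hwy)
    have hsum : (∑ y ∈ verts, w y * φ y) = 1 := by
      rw [← hφz, ← hwz, map_sum]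
      congr 1; ext y'
      rw [map_smul]; rfl
    have hlt : (∑ y ∈ verts, w y * φ y) < ∑ y ∈ verts, w y := by
      apply Finset.sum_lt_sum
      · intro i hi
        calc w i * φ i ≤ w i * 1 := by
              apply mul_le_mul_of_nonneg_left (hφvert i hi) (hw0 i hi)
          _ = w i := by ring
      · exact ⟨y, hy, by nlinarith [hφylt, hwylt]⟩
    rw [hsum, hw1] at hlt
    exact lt_irrefl _ hlt
  -- two distinct vertices with φ-value 1
  have hexist2 : ∃ y₁ ∈ verts, ∃ y₂ ∈ verts, y₁ ≠ y₂ ∧ φ y₁ = 1 ∧ φ y₂ = 1 := by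
    obtain ⟨w, hw0, hw1, hwu, hwsupp⟩ := hdecomp u hu hφu
    obtain ⟨w', hw0', hw1', hwv, hwsupp'⟩ := hdecomp v hv hφv
    obtain ⟨y₁, hy₁, hwy₁⟩ := Finset.exists_ne_zero_of_sum_ne_zero (by rw [hw1]; norm_num :
      (∑ y ∈ verts, w y) ≠ 0)
    have hφy₁ : φ y₁ = 1 := hwsupp y₁ hy₁ hwy₁
    by_cases hall : ∀ y ∈ verts, φ y = 1 → y = y₁
    · exfalso
      have collapse : ∀ (w'' : (ℝ × ℝ) → ℝ) (z : ℝ × ℝ), (∑ y ∈ verts, w'' y) = 1 →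
          (∑ y ∈ verts, w'' y • y) = z → (∀ y ∈ verts, w'' y ≠ 0 → φ y = 1) → z = y₁ := by
        intro w'' z h1 h2 h3
        have : (∑ y ∈ verts, w'' y • y) = ∑ y ∈ verts, w'' y • y₁ := by
          apply Finset.sum_congr rfl
          intro y hy
          by_cases h0 : w'' y = 0
          · rw [h0]; simp
          · rw [hall y hy (h3 y hy h0)]
        rw [this, ← Finset.sum_smul, h1, one_smul] at h2
        exact h2.symm
      have hu1 : u = y₁ := collapse w u hw1 hwu hwsupp
      have hv1 : v = y₁ := collapse w' v hw1' hwv hwsupp'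
      exact huv (hu1.trans hv1.symm)
    · push_neg at hall
      obtain ⟨y₂, hy₂, hφy₂, hne⟩ := hall
      exact ⟨y₁, hy₁, y₂, hy₂, fun h => hne (h.symm), hφy₁, hφy₂⟩
  -- pick the two distinct vertices
  obtain ⟨y₁, hy₁, y₂, hy₂, hy12, hφy₁, hφy₂⟩ := hexist2
  obtain ⟨j, -, hjv⟩ := Finset.mem_image.mp hy₁
  obtain ⟨k, -, hkv⟩ := Finset.mem_image.mp hy₂
  have hjk : j ≠ k := by
    intro h; rw [h, hkv] at hjv; exact hy12 hjv.symm
  -- polar form of φ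
  have hab : ¬ (φ (1, 0) = 0 ∧ φ (0, 1) = 0) := by
    rintro ⟨ha, hb⟩
    rw [lin_apply φ x, ha, hb] at hφx1
    simp at hφx1
  obtain ⟨s, δ, hs, ha, hb, hpolar⟩ := exists_polar _ _ hab
  have hval : ∀ α : ℝ, φ (r * Real.cos α, r * Real.sin α)
      = (r * s) * Real.cos (δ + α) := by
    intro α
    rw [lin_apply]
    simp only
    have h2 : r * Real.cos α * φ (1, 0) + r * Real.sin α * φ (0, 1)
        = r * (φ (1, 0) * Real.cos α + φ (0, 1) * Real.sin α) := by ring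
    rw [h2, hpolar α]; ring
  have hvert : ∀ m : Fin (2 * lam),
      φ (P m) = (r * s) * Real.cos ((δ + θ) + (m : ℕ) * (π / lam)) := by
    intro m
    rw [hP]
    simp only [polyVerts]
    rw [hval (θ + (m : ℕ) * π / lam)]
    congr 1
    ring
  -- hypotheses of trig_key
  have hjkint : ¬ ((2 * (lam:ℤ)) ∣ ((j.1 : ℤ) - (k.1 : ℤ))) := by
    have hj2 : (j.1 : ℤ) < 2 * lam := by exact_mod_cast j.2
    have hk2 : (k.1 : ℤ) < 2 * lam := by exact_mod_cast k.2
    have hj3 : (0:ℤ) ≤ (j.1 : ℤ) := by positivity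
    have hk3 : (0:ℤ) ≤ (k.1 : ℤ) := by positivity
    have hlz : (2:ℤ) ≤ (lam:ℤ) := by exact_mod_cast hlam
    intro ⟨c, hc⟩
    have hc0 : c = 0 := by
      rcases lt_trichotomy c 0 with h | h | h
      · have h4 : 2 * (lam:ℤ) * c ≤ 2 * (lam:ℤ) * (-1) :=
          mul_le_mul_of_nonneg_left (by omega) (by omega)
        linarith [hc, h4, hj2, hk2, hj3, hk3]
      · exact h
      · have h4 : 2 * (lam:ℤ) * 1 ≤ 2 * (lam:ℤ) * c :=
          mul_le_mul_of_nonneg_left (by omega) (by omega)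
        linarith [hc, h4, hj2, hk2, hj3, hk3]
    rw [hc0, mul_zero] at hc
    have hv : j.1 = k.1 := by omega
    exact hjk (Fin.ext hv)
  have hjeq : (r * s) * Real.cos ((δ + θ) + ((j.1 : ℤ) : ℝ) * (π / lam)) = 1 := by
    have h5 := hvert j
    rw [hjv, hφy₁] at h5
    push_cast
    linarith [h5]
  have hkeq : (r * s) * Real.cos ((δ + θ) + ((k.1 : ℤ) : ℝ) * (π / lam)) = 1 := by
    have h5 := hvert k
    rw [hkv, hφy₂] at h5
    push_cast
    linarith [h5]
  have hle : ∀ m : ℤ, (r * s) * Real.cos ((δ + θ) + m * (π / lam)) ≤ 1 := by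
    intro m
    have h2lpos : (0:ℤ) < 2 * lam := by exact_mod_cast (by omega : 0 < 2 * lam)
    have hmod : (0:ℤ) ≤ m % (2 * lam) := Int.emod_nonneg m (ne_of_gt h2lpos)
    have hmodlt : m % (2 * lam) < 2 * lam := Int.emod_lt_of_pos m h2lpos
    have hm₀lt : (m % (2 * (lam:ℤ))).toNat < 2 * lam := by omega
    set fm : Fin (2 * lam) := ⟨(m % (2 * (lam:ℤ))).toNat, hm₀lt⟩ with hfmdef
    have hfmem : P fm ∈ verts := by
      rw [hverts]
      exact Finset.mem_image.mpr ⟨fm, Finset.mem_univ _, rfl⟩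
    have hfm : φ (P fm) ≤ 1 := hφvert _ hfmem
    rw [hvert fm] at hfm
    have hdiveq : (2 * (lam:ℤ)) * (m / (2 * lam)) + m % (2 * lam) = m :=
      Int.mul_ediv_add_emod m (2 * lam)
    have h5 : ((fm : ℕ) : ℤ) = m % (2 * lam) := Int.toNat_of_nonneg hmod
    have h6 : (2 * (lam:ℤ)) * (m / (2 * lam)) + ((fm : ℕ) : ℤ) = m := by rw [h5]; exact hdiveq
    have hqeq : (m : ℝ) = ((fm : ℕ) : ℝ) + (2 * lam) * ((m / (2 * (lam:ℤ)) : ℤ) : ℝ) := by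
      have h7 := congrArg (fun z : ℤ => (z : ℝ)) h6
      push_cast at h7
      linarith [h7]
    have harg : (δ + θ) + (m : ℝ) * (π / lam)
        = ((δ + θ) + ((fm : ℕ) : ℝ) * (π / lam)) + ((m / (2 * (lam:ℤ)) : ℤ) : ℝ) * (2 * π) := by
      rw [hqeq]
      field_simp
      ring
    rw [harg, Real.cos_add_int_mul_two_pi]
    exact hfm
  obtain ⟨hcosval, t, ε, hε, hAform⟩ :=
    trig_key lam hlam (r * s) 1 one_pos (by positivity) (δ + θ) j.1 k.1 hjkint hjeq hkeq hle
  push_cast at hAform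
  have hδe : δ = 2 * π * t + ε * (π / (2 * (lam:ℝ))) - θ - (j.1 : ℝ) * (π / lam) := by
    linarith [hAform]
  have hcosne : Real.cos (π / (2 * (lam:ℝ))) ≠ 0 := by
    intro h0
    rw [h0] at hcosval
    simp at hcosval
  have hrs : r * s * Real.cos (π / (2 * (lam:ℝ))) = 1 := hcosval
  have hseq : s = 1 / (r * Real.cos (π / (2 * (lam:ℝ)))) := by
    field_simp
    linarith [hrs]
  have hhalf2 : π / (lam:ℝ) = 2 * (π / (2 * (lam:ℝ))) := by
    field_simp
  rcases hε with hε | hε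
  · have hδ2 : δ = -((θ - π / (2 * (lam:ℝ))) + (j.1 : ℝ) * (π / lam)) + (t : ℝ) * (2 * π) := by
      rw [hδe, hε]; ring
    refine ⟨(j.1 : ℤ), ?_, ?_⟩
    · rw [ha, hseq, hδ2, Real.cos_add_int_mul_two_pi, Real.cos_neg]
      congr 2 <;> (try push_cast) <;> (try ring)
    · rw [hb, hseq, hδ2, Real.sin_add_int_mul_two_pi, Real.sin_neg]
      rw [show -(1 / (r * Real.cos (π / (2 * (lam:ℝ)))) * -Real.sin ((θ - π / (2 * (lam:ℝ))) + (j.1 : ℝ) * (π / lam))) = 1 / (r * Real.cos (π / (2 * (lam:ℝ)))) * Real.sin ((θ - π / (2 * (lam:ℝ))) + (j.1 : ℝ) * (π / lam)) from by ring]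
      congr 2 <;> (try push_cast) <;> (try ring)
  · have hδ2 : δ = -((θ - π / (2 * (lam:ℝ))) + ((j.1 : ℝ) + 1) * (π / lam)) + (t : ℝ) * (2 * π) := by
      rw [hδe, hε, hhalf2]; ring
    refine ⟨(j.1 : ℤ) + 1, ?_, ?_⟩
    · rw [ha, hseq, hδ2, Real.cos_add_int_mul_two_pi, Real.cos_neg]
      congr 2 <;> (try push_cast) <;> (try ring)
    · rw [hb, hseq, hδ2, Real.sin_add_int_mul_two_pi, Real.sin_neg]
      rw [show -(1 / (r * Real.cos (π / (2 * (lam:ℝ)))) * -Real.sin ((θ - π / (2 * (lam:ℝ))) + ((j.1 : ℝ) + 1) * (π / lam))) = 1 / (r * Real.cos (π / (2 * (lam:ℝ)))) * Real.sin ((θ - π / (2 * (lam:ℝ))) + ((j.1 : ℝ) + 1) * (π / lam)) from by ring]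
      congr 2 <;> (try push_cast) <;> (try ring)

set_option maxHeartbeats 1000000 in
/-- If λ is not divisible by 3, a λ-normed plane does not satisfy the first
non-uniqueness condition. -/
theorem lambda_plane_no_first_condition
    (lam : ℕ) (hlam : 2 ≤ lam) (h3 : ¬ 3 ∣ lam)
    (N : ℝ × ℝ → ℝ) (hN : IsLambdaNorm lam N) :
    ¬ ∃ (x₁ x₂ x₃ : ℝ × ℝ) (φ₁ φ₂ φ₃ : (ℝ × ℝ) →ₗ[ℝ] ℝ),
        FirstTypeN N x₁ ∧ FirstTypeN N x₂ ∧ FirstTypeN N x₃ ∧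
        IsNormingN N φ₁ x₁ ∧ IsNormingN N φ₂ x₂ ∧ IsNormingN N φ₃ x₃ ∧
        φ₁ + φ₂ + φ₃ = 0 := by
  rintro ⟨x₁, x₂, x₃, φ₁, φ₂, φ₃, h₁, h₂, h₃, n₁, n₂, n₃, hsum⟩
  obtain ⟨hNorm, r, hr, θ, hball⟩ := hN
  have hlpos : (0:ℝ) < lam := by exact_mod_cast (by omega : 0 < lam)
  have hπ : (0:ℝ) < π := Real.pi_pos
  set s₀ : ℝ := 1 / (r * Real.cos (π / (2 * (lam:ℝ)))) with hs₀
  set θ' : ℝ := θ - π / (2 * (lam:ℝ)) with hθ'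
  obtain ⟨M₁, ha₁, hb₁⟩ := norming_form lam hlam N r hr θ hball x₁ φ₁ h₁ n₁
  obtain ⟨M₂, ha₂, hb₂⟩ := norming_form lam hlam N r hr θ hball x₂ φ₂ h₂ n₂
  obtain ⟨M₃, ha₃, hb₃⟩ := norming_form lam hlam N r hr θ hball x₃ φ₃ h₃ n₃
  -- s₀ > 0
  have hcospos : 0 < Real.cos (π / (2 * (lam:ℝ))) := by
    apply Real.cos_pos_of_mem_Ioo
    constructor
    · have : (0:ℝ) < π / (2 * (lam:ℝ)) := by positivity
      linarith [this, hπ]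
    · rw [div_lt_div_iff₀ (by positivity) (by norm_num : (0:ℝ) < 2)]
      have h2 : (2:ℝ) ≤ (lam:ℝ) := by exact_mod_cast hlam
      nlinarith [hπ, h2]
  have hs₀pos : 0 < s₀ := by rw [hs₀]; positivity
  -- sums of functional values vanish
  have hsa : φ₁ (1, 0) + φ₂ (1, 0) + φ₃ (1, 0) = 0 := by
    have : (φ₁ + φ₂ + φ₃) (1, 0) = 0 := by rw [hsum]; rfl
    simpa using this
  have hsb : φ₁ (0, 1) + φ₂ (0, 1) + φ₃ (0, 1) = 0 := by
    have : (φ₁ + φ₂ + φ₃) (0, 1) = 0 := by rw [hsum]; rfl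
    simpa using this
  set ψ₁ : ℝ := θ' + M₁ * (π / lam) with hψ₁
  set ψ₂ : ℝ := θ' + M₂ * (π / lam) with hψ₂
  set ψ₃ : ℝ := θ' + M₃ * (π / lam) with hψ₃
  have hcsum : Real.cos ψ₁ + Real.cos ψ₂ + Real.cos ψ₃ = 0 := by
    rw [ha₁, ha₂, ha₃] at hsa
    have : s₀ * (Real.cos ψ₁ + Real.cos ψ₂ + Real.cos ψ₃) = 0 := by
      rw [← hsa]; ring
    rcases mul_eq_zero.mp this with h | h
    · exact absurd h hs₀pos.ne'
    · exact h
  have hssum : Real.sin ψ₁ + Real.sin ψ₂ + Real.sin ψ₃ = 0 := by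
    rw [hb₁, hb₂, hb₃] at hsb
    have : s₀ * (Real.sin ψ₁ + Real.sin ψ₂ + Real.sin ψ₃) = 0 := by
      rw [← hsb]; ring
    rcases mul_eq_zero.mp this with h | h
    · exact absurd h hs₀pos.ne'
    · exact h
  -- cos (ψ₁ - ψ₂) = -1/2
  have hpyth : ∀ α : ℝ, Real.sin α ^ 2 + Real.cos α ^ 2 = 1 := fun α => Real.sin_sq_add_cos_sq α
  have hkey : Real.cos ψ₁ * Real.cos ψ₂ + Real.sin ψ₁ * Real.sin ψ₂ = -(1/2) := by
    have e1 := hpyth ψ₁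
    have e2 := hpyth ψ₂
    have e3 := hpyth ψ₃
    have hc3 : Real.cos ψ₃ = -(Real.cos ψ₁ + Real.cos ψ₂) := by linarith [hcsum]
    have hs3 : Real.sin ψ₃ = -(Real.sin ψ₁ + Real.sin ψ₂) := by linarith [hssum]
    rw [hc3, hs3] at e3
    linear_combination e3 / 2 - e1 / 2 - e2 / 2
  have hcos12 : Real.cos (ψ₁ - ψ₂) = -(1/2) := by
    rw [Real.cos_sub]; linarith [hkey]
  have harg : ψ₁ - ψ₂ = ((M₁ - M₂ : ℤ) : ℝ) * (π / lam) := by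
    rw [hψ₁, hψ₂]; push_cast; ring
  rw [harg] at hcos12
  exact h3 (div_three_of_cos lam hlam (M₁ - M₂) hcos12)
end

section
/- Let λ ≥ 2 be an integer and let X be a λ-normed plane. Then X does not satisfy the third non-uniqueness condition: there do not exist a unit vector x₃ of the first type and unit vectors x₁, x₂ of the zero type with x₂ = −x₁, together with norming functionals φ₁, φ₂, φ₃ for x₁, x₂, x₃, such that φ₁ + φ₂ + φ₃ = 0 and, for i = 1, 2, xᵢ is the only unit vector y with φᵢ(y) = 1. -/
open Real

lemma aux_sin_period (d : ℤ) (hd : 0 < d) (k : ℤ) :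
    Real.sin (k * (π / d)) = Real.sin (((k % (2*d) : ℤ) : ℝ) * (π / d)) := by
  have h : k % (2*d) + 2*d * (k / (2*d)) = k := Int.emod_add_mul_ediv k (2*d)
  have hd' : (d : ℝ) ≠ 0 := by exact_mod_cast hd.ne'
  have hk : (k : ℝ) * (π/d) = ((k % (2*d) : ℤ) : ℝ) * (π/d) + ((k / (2*d) : ℤ) : ℝ) * (2 * π) := by
    have : (k : ℝ) = ((k % (2*d) : ℤ) : ℝ) + 2*d * ((k / (2*d) : ℤ) : ℝ) := by exact_mod_cast h.symm
    rw [this]; field_simp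
  rw [hk, Real.sin_add_int_mul_two_pi]

lemma aux_sin3_bound (k : ℤ) : |Real.sin (k * (π/3))| ≤ Real.sqrt 3 / 2 := by
  rw [show ((3:ℝ)) = ((3:ℤ):ℝ) by norm_num, aux_sin_period 3 (by norm_num) k]
  have h0 : 0 ≤ k % 6 := Int.emod_nonneg k (by norm_num)
  have h1 : k % 6 < 6 := Int.emod_lt_of_pos k (by norm_num)
  have hs3 : (0:ℝ) ≤ Real.sqrt 3 / 2 := by positivity
  set r := k % (2*3) with hr
  have h0' : 0 ≤ r := h0
  have h1' : r < 6 := h1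
  clear_value r
  interval_cases r
  · norm_num [hs3]
  · norm_num [Real.sin_pi_div_three, abs_of_nonneg hs3]
  · rw [show (((2:ℤ)):ℝ) * (π/((3:ℤ):ℝ)) = π - π/3 by push_cast; ring, Real.sin_pi_sub,
      Real.sin_pi_div_three, abs_of_nonneg hs3]; norm_num
  · rw [show (((3:ℤ)):ℝ) * (π/((3:ℤ):ℝ)) = π by push_cast; ring, Real.sin_pi]; simpa using hs3
  · rw [show (((4:ℤ)):ℝ) * (π/((3:ℤ):ℝ)) = π/3 + π by push_cast; ring, Real.sin_add_pi,
      Real.sin_pi_div_three, abs_neg, abs_of_nonneg hs3]; norm_num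
  · rw [show (((5:ℤ)):ℝ) * (π/((3:ℤ):ℝ)) = (π - π/3) + π by push_cast; ring, Real.sin_add_pi,
      Real.sin_pi_sub, Real.sin_pi_div_three, abs_neg, abs_of_nonneg hs3]; norm_num

lemma aux_sin2_vals (k : ℤ) : (k % 4 = 1 ∧ Real.sin (k * (π/2)) = 1) ∨
    (k % 4 = 3 ∧ Real.sin (k * (π/2)) = -1) ∨ Real.sin (k * (π/2)) = 0 := by
  rw [show ((2:ℝ)) = ((2:ℤ):ℝ) by norm_num, aux_sin_period 2 (by norm_num) k]
  have h0 : 0 ≤ k % 4 := Int.emod_nonneg k (by norm_num)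
  have h1 : k % 4 < 4 := Int.emod_lt_of_pos k (by norm_num)
  set r := k % (2*2) with hr
  have h0' : 0 ≤ r := by omega
  have h1' : r < 4 := by omega
  clear_value r
  interval_cases r
  · norm_num
  · left; refine ⟨by omega, ?_⟩
    rw [show (((1:ℤ)):ℝ) * (π/((2:ℤ):ℝ)) = π/2 by push_cast; ring, Real.sin_pi_div_two]
  · right; right
    rw [show (((2:ℤ)):ℝ) * (π/((2:ℤ):ℝ)) = π by push_cast; ring, Real.sin_pi]
  · right; left; refine ⟨by omega, ?_⟩
    rw [show (((3:ℤ)):ℝ) * (π/((2:ℤ):ℝ)) = π/2 + π by push_cast; ring, Real.sin_add_pi,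
      Real.sin_pi_div_two]

lemma aux_key_ineq (x : ℝ) (hx : 0 < x) (hx4 : x ≤ π/4) : 2*(1 - Real.cos x) ≤ Real.sin x := by
  have hs : Real.sin x = 2 * Real.sin (x/2) * Real.cos (x/2) := by
    rw [← Real.sin_two_mul]; ring_nf
  have hc : Real.cos x = 1 - 2 * Real.sin (x/2)^2 := by
    have h1 := Real.cos_two_mul (x/2)
    rw [show 2*(x/2) = x by ring] at h1
    have h2 := Real.sin_sq_add_cos_sq (x/2)
    nlinarith
  have hs2pos : 0 < Real.sin (x/2) := by
    apply Real.sin_pos_of_pos_of_lt_pi (by linarith)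
    nlinarith [Real.pi_gt_three]
  have hsle : Real.sin (x/2) ≤ x/2 := le_of_lt (Real.sin_lt (by linarith))
  have hcge : 1 - (x/2)^2/2 ≤ Real.cos (x/2) := Real.one_sub_sq_div_two_le_cos
  have hkey : 2 * Real.sin (x/2) ≤ Real.cos (x/2) := by
    nlinarith [Real.pi_lt_d2, Real.pi_pos]
  nlinarith

/-- Auxiliary: integer-indexed vertices of the regular 2λ-gon. -/
noncomputable def auxP (lam : ℕ) (r θ : ℝ) : ℤ → ℝ × ℝ :=
  fun k => (r * Real.cos (θ + (k:ℤ) * π / lam), r * Real.sin (θ + (k:ℤ) * π / lam))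

lemma auxP_pv (lam : ℕ) (r θ : ℝ) (i : Fin (2*lam)) :
    polyVerts lam r θ i = auxP lam r θ ((i : ℕ) : ℤ) := by
  simp only [polyVerts, auxP, Int.cast_natCast]

lemma auxP_per (lam : ℕ) (hlam : 2 ≤ lam) (r θ : ℝ) (k n : ℤ) :
    auxP lam r θ (k + 2*(lam:ℤ)*n) = auxP lam r θ k := by
  have hlamR0 : (0:ℝ) < (lam:ℝ) := by
    have : (0:ℕ) < lam := by omega
    exact_mod_cast this
  have hang : θ + ((k + 2*(lam:ℤ)*n : ℤ):ℝ) * π / lam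
      = (θ + (k:ℝ) * π / lam) + (n:ℝ) * (2*π) := by
    push_cast; field_simp; ring
  simp only [auxP]
  rw [hang, Real.cos_add_int_mul_two_pi, Real.sin_add_int_mul_two_pi]

lemma auxP_range (lam : ℕ) (hlam : 2 ≤ lam) (r θ : ℝ) (k : ℤ) :
    auxP lam r θ k ∈ Set.range (polyVerts lam r θ) := by
  have h2l : (0:ℤ) < 2*(lam:ℤ) := by omega
  have hml := Int.emod_lt_of_pos k h2l
  have hm0 := Int.emod_nonneg k h2l.ne'
  have hilt : (k % (2*(lam:ℤ))).toNat < 2*lam := by omega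
  refine ⟨⟨(k % (2*(lam:ℤ))).toNat, hilt⟩, ?_⟩
  rw [auxP_pv]
  have hik : (((k % (2*(lam:ℤ))).toNat : ℕ) : ℤ) = k % (2*(lam:ℤ)) := by omega
  have h := auxP_per lam hlam r θ (k % (2*(lam:ℤ))) (k / (2*(lam:ℤ)))
  rw [Int.emod_add_mul_ediv k (2*(lam:ℤ))] at h
  rw [show (((⟨(k % (2*(lam:ℤ))).toNat, hilt⟩ : Fin (2*lam)) : ℕ) : ℤ)
      = k % (2*(lam:ℤ)) from hik, ← h]

lemma auxP_inj (lam : ℕ) (hlam : 2 ≤ lam) (r θ : ℝ) (hr : 0 < r) (j j' : ℤ)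
    (hEq : auxP lam r θ j = auxP lam r θ j') : (2*(lam:ℤ)) ∣ (j - j') := by
  have hlamR0 : (0:ℝ) < (lam:ℝ) := by
    have : (0:ℕ) < lam := by omega
    exact_mod_cast this
  simp only [auxP, Prod.mk.injEq] at hEq
  obtain ⟨h1, h2⟩ := hEq
  set α : ℝ := θ + (j:ℝ) * π / lam with hα
  set β : ℝ := θ + (j':ℝ) * π / lam with hβ
  have hcc : Real.cos α = Real.cos β := mul_left_cancel₀ hr.ne' h1
  have hss : Real.sin α = Real.sin β := mul_left_cancel₀ hr.ne' h2
  have hone : Real.cos (α - β) = 1 := by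
    rw [Real.cos_sub, hcc, hss]
    nlinarith [Real.sin_sq_add_cos_sq β]
  obtain ⟨n, hn⟩ := (Real.cos_eq_one_iff _).mp hone
  have hab : α - β = ((j:ℝ) - (j':ℝ)) * π / lam := by rw [hα, hβ]; ring
  rw [hab] at hn
  have hpi := Real.pi_ne_zero
  have h3 : ((j:ℝ) - (j':ℝ)) * π = ((2*(lam:ℤ)*n : ℤ):ℝ) * π := by
    have h := congrArg (fun x : ℝ => x * (lam:ℝ)) hn
    rw [div_mul_cancel₀ _ hlamR0.ne'] at h
    push_cast
    linarith
  have h4 : ((j - j' : ℤ):ℝ) = ((2*(lam:ℤ)*n : ℤ):ℝ) := by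
    have := mul_right_cancel₀ hpi h3
    push_cast at this ⊢
    linarith
  exact ⟨n, by exact_mod_cast h4⟩

lemma auxP_neg (lam : ℕ) (hlam : 2 ≤ lam) (r θ : ℝ) (k : ℤ) :
    auxP lam r θ (k + lam) = - auxP lam r θ k := by
  have hlamR0 : (0:ℝ) < (lam:ℝ) := by
    have : (0:ℕ) < lam := by omega
    exact_mod_cast this
  have ha : θ + ((k + (lam:ℤ) : ℤ):ℝ) * π / lam = (θ + (k:ℝ) * π / lam) + π := by
    push_cast; field_simp; ring
  simp only [auxP]
  rw [ha, Real.cos_add_pi, Real.sin_add_pi, Prod.neg_mk, Prod.mk.injEq]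
  exact ⟨by ring, by ring⟩

lemma auxP_dec (lam : ℕ) (hlam : 2 ≤ lam) (r θ : ℝ) (m t : ℤ) :
    auxP lam r θ (m + t) = Real.cos ((t:ℝ) * (π/lam)) • auxP lam r θ m
      + Real.sin ((t:ℝ) * (π/lam)) •
        ((-(r * Real.sin (θ + (m:ℝ) * π / lam)), r * Real.cos (θ + (m:ℝ) * π / lam)) : ℝ × ℝ) := by
  have hlamR0 : (0:ℝ) < (lam:ℝ) := by
    have : (0:ℕ) < lam := by omega
    exact_mod_cast this
  have ha : θ + ((m + t : ℤ):ℝ) * π / lam = (θ + (m:ℝ) * π / lam) + (t:ℝ) * (π/lam) := by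
    push_cast; field_simp; ring
  simp only [auxP, Prod.smul_mk, smul_eq_mul, Prod.mk_add_mk, Prod.mk.injEq]
  rw [ha]
  constructor <;> · simp only [Real.cos_add, Real.sin_add]; ring

set_option maxHeartbeats 1600000 in
/-- A λ-normed plane never satisfies the third non-uniqueness condition. -/
theorem lambda_plane_no_third_condition
    (lam : ℕ) (hlam : 2 ≤ lam)
    (N : ℝ × ℝ → ℝ) (hN : IsLambdaNorm lam N) :
    ¬ ∃ (x₁ x₂ x₃ : ℝ × ℝ) (φ₁ φ₂ φ₃ : (ℝ × ℝ) →ₗ[ℝ] ℝ),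
        ZeroTypeN N x₁ ∧ ZeroTypeN N x₂ ∧ x₂ = -x₁ ∧ FirstTypeN N x₃ ∧
        IsNormingN N φ₁ x₁ ∧ IsNormingN N φ₂ x₂ ∧ IsNormingN N φ₃ x₃ ∧
        φ₁ + φ₂ + φ₃ = 0 ∧
        (∀ y : ℝ × ℝ, N y = 1 → φ₁ y = 1 → y = x₁) ∧
        (∀ y : ℝ × ℝ, N y = 1 → φ₂ y = 1 → y = x₂) := by
  obtain ⟨⟨htri, hhom, hzN⟩, r, hr, θ, hball⟩ := hN
  rintro ⟨x₁, x₂, x₃, φ₁, φ₂, φ₃, ⟨hNx₁, -⟩, ⟨hNx₂, -⟩, hx21, ⟨hNx₃, u, v, huv, hNu, hNv, hseg, -⟩,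
    ⟨hb₁, hv₁⟩, ⟨hb₂, hv₂⟩, ⟨hb₃, hv₃⟩, hsum, hu₁, hu₂⟩
  have hmem := Set.ext_iff.mp hball
  have hlamR : (2:ℝ) ≤ (lam:ℝ) := by exact_mod_cast hlam
  have hlamZ : (2:ℤ) ≤ (lam:ℤ) := by exact_mod_cast hlam
  have hlamR0 : (0:ℝ) < (lam:ℝ) := by linarith
  have hspos : 0 < π / (lam:ℝ) := by positivity
  have hslt : π / (lam:ℝ) ≤ π/2 := by
    rw [div_le_div_iff₀ hlamR0 (by norm_num)]
    nlinarith [Real.pi_pos]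
  have hpv := auxP_pv lam r θ
  have hNnonneg : ∀ x : ℝ × ℝ, 0 ≤ N x := by
    intro x
    have h0 : N 0 = 0 := by simpa using hhom 0 0
    have hneg : N (-x) = N x := by simpa using hhom (-1) x
    have h := htri x (-x)
    rw [add_neg_cancel, h0, hneg] at h
    linarith
  -- vertices are unit vectors
  have hNP : ∀ k : ℤ, N (auxP lam r θ k) = 1 := by
    intro k
    have hle : N (auxP lam r θ k) ≤ 1 :=
      (hmem _).mpr (subset_convexHull ℝ _ (auxP_range lam hlam r θ k))
    by_contra hne
    have hlt : N (auxP lam r θ k) < 1 := lt_of_le_of_ne hle hne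
    set α : ℝ := θ + (k:ℝ) * π / lam with hα
    have hglin : IsLinearMap ℝ (fun y : ℝ × ℝ => Real.cos α * y.1 + Real.sin α * y.2) := by
      constructor
      · intro a b; simp only [Prod.fst_add, Prod.snd_add]; ring
      · intro c a; simp only [Prod.smul_fst, Prod.smul_snd, smul_eq_mul]; ring
    have hsub : convexHull ℝ (Set.range (polyVerts lam r θ)) ⊆
        {y : ℝ × ℝ | Real.cos α * y.1 + Real.sin α * y.2 ≤ r} := by
      apply convexHull_min ?_ (convex_halfSpace_le hglin r)
      rintro z ⟨i, rfl⟩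
      rw [hpv i]
      show Real.cos α * (auxP lam r θ ((i:ℕ):ℤ)).1 + Real.sin α * (auxP lam r θ ((i:ℕ):ℤ)).2 ≤ r
      simp only [auxP]
      set β : ℝ := θ + (((i:ℕ):ℤ):ℝ) * π / lam
      have h1 : Real.cos α * (r * Real.cos β) + Real.sin α * (r * Real.sin β)
          = r * Real.cos (β - α) := by rw [Real.cos_sub]; ring
      rw [h1]
      nlinarith [Real.cos_le_one (β - α)]
    have hpyth := Real.sin_sq_add_cos_sq α
    have hP1 : (auxP lam r θ k).1 = r * Real.cos α := rfl
    have hP2 : (auxP lam r θ k).2 = r * Real.sin α := rfl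
    rcases eq_or_lt_of_le (hNnonneg (auxP lam r θ k)) with h0 | h0
    · have hz := hzN _ h0.symm
      have h1 : r * Real.cos α = 0 := by rw [← hP1, hz]; rfl
      have h2 : r * Real.sin α = 0 := by rw [← hP2, hz]; rfl
      have hc0 : Real.cos α = 0 := by
        rcases mul_eq_zero.mp h1 with h | h
        · exact absurd h hr.ne'
        · exact h
      have hs0 : Real.sin α = 0 := by
        rcases mul_eq_zero.mp h2 with h | h
        · exact absurd h hr.ne'
        · exact h
      rw [hc0, hs0] at hpyth
      norm_num at hpyth
    · set c := N (auxP lam r θ k) with hc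
      have hyball : N (c⁻¹ • auxP lam r θ k) ≤ 1 := by
        rw [hhom, abs_of_pos (inv_pos.mpr h0), ← hc, inv_mul_cancel₀ h0.ne']
      have hyhull := hsub ((hmem _).mp hyball)
      have hy1 : (c⁻¹ • auxP lam r θ k).1 = c⁻¹ * (r * Real.cos α) := rfl
      have hy2 : (c⁻¹ • auxP lam r θ k).2 = c⁻¹ * (r * Real.sin α) := rfl
      rw [Set.mem_setOf_eq, hy1, hy2] at hyhull
      have hcinv : 1 < c⁻¹ := (one_lt_inv_iff₀).mpr ⟨h0, hlt⟩
      have heq : Real.cos α * (c⁻¹*(r*Real.cos α)) + Real.sin α * (c⁻¹*(r*Real.sin α))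
          = c⁻¹ * r := by linear_combination (c⁻¹ * r) * hpyth
      rw [heq] at hyhull
      linarith [mul_lt_mul_of_pos_right hcinv hr]
  -- forcing lemma: convex decomposition with all support vertices attaining the functional
  have hforce : ∀ (φ : (ℝ × ℝ) →ₗ[ℝ] ℝ) (y : ℝ × ℝ), (∀ z, |φ z| ≤ N z) → φ y = 1 → N y ≤ 1 →
      ∃ (t : Finset (Fin (2*lam))) (w : Fin (2*lam) → ℝ), (∀ i ∈ t, 0 ≤ w i) ∧
        (∑ i ∈ t, w i = 1) ∧ (∑ i ∈ t, w i • polyVerts lam r θ i = y) ∧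
        (∀ i ∈ t, w i ≠ 0 → φ (polyVerts lam r θ i) = 1) := by
    intro φ y hb hy hNy
    have hyh : y ∈ convexHull ℝ (Set.range (polyVerts lam r θ)) := (hmem y).mp hNy
    rw [convexHull_range_eq_exists_affineCombination] at hyh
    obtain ⟨t, w, hw0, hw1, hcomb⟩ := hyh
    rw [Finset.affineCombination_eq_linear_combination t _ _ hw1] at hcomb
    refine ⟨t, w, hw0, hw1, hcomb, ?_⟩
    intro i hi hwi
    have hvle : ∀ i' : Fin (2*lam), φ (polyVerts lam r θ i') ≤ 1 := by
      intro i'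
      have := hb (polyVerts lam r θ i')
      rw [hpv i', hNP] at this
      exact le_trans (le_abs_self _) this
    by_contra hne
    have hlt : φ (polyVerts lam r θ i) < 1 := lt_of_le_of_ne (hvle i) hne
    have hys : φ y = ∑ i' ∈ t, w i' * φ (polyVerts lam r θ i') := by
      rw [← hcomb, map_sum]
      simp only [map_smul, smul_eq_mul]
    have hstrict : ∑ i' ∈ t, w i' * φ (polyVerts lam r θ i') < ∑ i' ∈ t, w i' := by
      apply Finset.sum_lt_sum
      · intro i' hi'
        have := mul_le_mul_of_nonneg_left (hvle i') (hw0 i' hi')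
        simpa using this
      · refine ⟨i, hi, ?_⟩
        have hwpos : 0 < w i := lt_of_le_of_ne (hw0 i hi) (Ne.symm hwi)
        nlinarith
    rw [← hys, hy, hw1] at hstrict
    exact lt_irrefl _ hstrict
  -- x₁ is a vertex
  have hφx₁ : φ₁ x₁ = 1 := by rw [hv₁, hNx₁]
  obtain ⟨m, hm⟩ : ∃ m : ℤ, x₁ = auxP lam r θ m := by
    obtain ⟨t, w, hw0, hw1, hcomb, hkey⟩ := hforce φ₁ x₁ hb₁ hφx₁ hNx₁.le
    obtain ⟨i0, hi0t, hwi0⟩ := Finset.exists_ne_zero_of_sum_ne_zero (by rw [hw1]; norm_num :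
      ∑ i ∈ t, w i ≠ 0)
    have h1 : φ₁ (polyVerts lam r θ i0) = 1 := hkey i0 hi0t hwi0
    have h2 := hu₁ _ (by rw [hpv i0]; exact hNP _) h1
    exact ⟨((i0 : ℕ) : ℤ), by rw [← h2, hpv i0]⟩
  -- φ₃ attains 1 at two geometrically distinct vertices
  have hφx₃ : φ₃ x₃ = 1 := by rw [hv₃, hNx₃]
  obtain ⟨a, b, ha, hb, hab, hx⟩ := hseg
  have hφu1 : φ₃ u ≤ 1 := by
    have := hb₃ u; rw [hNu] at this; exact le_trans (le_abs_self _) this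
  have hφv1 : φ₃ v ≤ 1 := by
    have := hb₃ v; rw [hNv] at this; exact le_trans (le_abs_self _) this
  have hxval : a * φ₃ u + b * φ₃ v = 1 := by
    rw [← hφx₃, ← hx]
    simp [map_add, map_smul]
  have hφu : φ₃ u = 1 := by
    by_contra hne
    have hXlt : φ₃ u < 1 := lt_of_le_of_ne hφu1 hne
    have h1 := mul_lt_mul_of_pos_left hXlt ha
    have h2 := mul_le_mul_of_nonneg_left hφv1 hb.le
    rw [mul_one] at h1 h2
    linarith
  have hφv : φ₃ v = 1 := by
    by_contra hne
    have hXlt : φ₃ v < 1 := lt_of_le_of_ne hφv1 hne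
    have h1 := mul_lt_mul_of_pos_left hXlt hb
    have h2 := mul_le_mul_of_nonneg_left hφu1 ha.le
    rw [mul_one] at h1 h2
    linarith
  -- combination forced to a single point lemma
  have hfix : ∀ (t : Finset (Fin (2*lam))) (w : Fin (2*lam) → ℝ) (y z : ℝ × ℝ),
      (∑ i ∈ t, w i = 1) → (∑ i ∈ t, w i • polyVerts lam r θ i = y) →
      (∀ i ∈ t, w i ≠ 0 → polyVerts lam r θ i = z) → y = z := by
    intro t w y z hw1 hcomb hall
    have : ∑ i ∈ t, w i • polyVerts lam r θ i = ∑ i ∈ t, w i • z := by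
      apply Finset.sum_congr rfl
      intro i hi
      by_cases hw : w i = 0
      · rw [hw, zero_smul, zero_smul]
      · rw [hall i hi hw]
    rw [this, ← Finset.sum_smul, hw1, one_smul] at hcomb
    exact hcomb.symm
  obtain ⟨j, j', hφj, hφj', hPjj'⟩ : ∃ j j' : ℤ, φ₃ (auxP lam r θ j) = 1 ∧
      φ₃ (auxP lam r θ j') = 1 ∧ auxP lam r θ j ≠ auxP lam r θ j' := by
    obtain ⟨t, w, hw0, hw1, hcomb, hkey⟩ := hforce φ₃ u hb₃ hφu hNu.le
    obtain ⟨t', w', hw0', hw1', hcomb', hkey'⟩ := hforce φ₃ v hb₃ hφv hNv.le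
    obtain ⟨i₀, hi₀, hwi₀⟩ := Finset.exists_ne_zero_of_sum_ne_zero (by rw [hw1]; norm_num :
      ∑ i ∈ t, w i ≠ 0)
    obtain ⟨i₁, hi₁, hwi₁⟩ := Finset.exists_ne_zero_of_sum_ne_zero (by rw [hw1']; norm_num :
      ∑ i ∈ t', w' i ≠ 0)
    by_cases hzz : polyVerts lam r θ i₁ = polyVerts lam r θ i₀
    · by_cases huz : u = polyVerts lam r θ i₀
      · have hnall : ¬ ∀ i ∈ t', w' i ≠ 0 → polyVerts lam r θ i = polyVerts lam r θ i₀ :=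
          fun hall => huv (by rw [huz, hfix t' w' v (polyVerts lam r θ i₀) hw1' hcomb' hall])
        push_neg at hnall
        obtain ⟨i₂, hi₂, hwi₂, hne₂⟩ := hnall
        refine ⟨((i₂:ℕ):ℤ), ((i₀:ℕ):ℤ), ?_, ?_, ?_⟩
        · rw [← hpv i₂]; exact hkey' i₂ hi₂ hwi₂
        · rw [← hpv i₀]; exact hkey i₀ hi₀ hwi₀
        · rw [← hpv i₂, ← hpv i₀]; exact hne₂
      · have hnall : ¬ ∀ i ∈ t, w i ≠ 0 → polyVerts lam r θ i = polyVerts lam r θ i₀ :=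
          fun hall => huz (hfix t w u (polyVerts lam r θ i₀) hw1 hcomb hall)
        push_neg at hnall
        obtain ⟨i₂, hi₂, hwi₂, hne₂⟩ := hnall
        refine ⟨((i₂:ℕ):ℤ), ((i₀:ℕ):ℤ), ?_, ?_, ?_⟩
        · rw [← hpv i₂]; exact hkey i₂ hi₂ hwi₂
        · rw [← hpv i₀]; exact hkey i₀ hi₀ hwi₀
        · rw [← hpv i₂, ← hpv i₀]; exact hne₂
    · refine ⟨((i₀:ℕ):ℤ), ((i₁:ℕ):ℤ), ?_, ?_, ?_⟩
      · rw [← hpv i₀]; exact hkey i₀ hi₀ hwi₀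
      · rw [← hpv i₁]; exact hkey' i₁ hi₁ hwi₁
      · rw [← hpv i₀, ← hpv i₁]; exact fun h => hzz h.symm
  have hndvd : ¬ ((2*(lam:ℤ)) ∣ (j - j')) := by
    rintro ⟨n, hn⟩
    apply hPjj'
    have hjj : j = j' + 2*(lam:ℤ)*n := by omega
    rw [hjj, auxP_per lam hlam r θ j' n]
  -- the perpendicular direction at vertex m
  set p2 : ℝ × ℝ := (-(r * Real.sin (θ + (m:ℝ) * π / lam)), r * Real.cos (θ + (m:ℝ) * π / lam))
    with hp2
  have hval : ∀ (φ : (ℝ × ℝ) →ₗ[ℝ] ℝ) (t : ℤ), φ (auxP lam r θ (m+t))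
      = Real.cos ((t:ℝ) * (π/lam)) * φ (auxP lam r θ m)
        + Real.sin ((t:ℝ) * (π/lam)) * φ p2 := by
    intro φ t
    rw [auxP_dec lam hlam r θ m t, map_add, map_smul, map_smul, smul_eq_mul, smul_eq_mul, ← hp2]
  have hA1 : φ₁ (auxP lam r θ m) = 1 := by rw [← hm]; exact hφx₁
  have hA2 : φ₂ (auxP lam r θ m) = -1 := by
    have hx12 : x₁ = -x₂ := by rw [hx21, neg_neg]
    rw [← hm, hx12, map_neg, hv₂, hNx₂]
  have hsum' : ∀ z : ℝ × ℝ, φ₁ z + φ₂ z + φ₃ z = 0 := by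
    intro z
    have := congrFun (congrArg (fun (ψ : (ℝ×ℝ) →ₗ[ℝ] ℝ) => (ψ : ℝ×ℝ → ℝ)) hsum) z
    simpa using this
  have hA3 : φ₃ (auxP lam r θ m) = 0 := by
    have := hsum' (auxP lam r θ m); rw [hA1, hA2] at this; linarith
  have hB3 : φ₃ p2 = -(φ₁ p2 + φ₂ p2) := by have := hsum' p2; linarith
  -- strict inequalities at non-distinguished vertices
  have hlt1 : ∀ k : ℤ, ¬((2*(lam:ℤ)) ∣ (k - m)) → φ₁ (auxP lam r θ k) < 1 := by
    intro k hk
    have hle : φ₁ (auxP lam r θ k) ≤ 1 := by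
      have := hb₁ (auxP lam r θ k); rw [hNP k] at this; exact le_trans (le_abs_self _) this
    refine lt_of_le_of_ne hle (fun h => hk ?_)
    have h2 := hu₁ _ (hNP k) h
    exact auxP_inj lam hlam r θ hr k m (h2.trans hm)
  have hx2m : x₂ = auxP lam r θ (m + lam) := by rw [auxP_neg lam hlam r θ m, ← hm, hx21]
  have hlt2 : ∀ k : ℤ, ¬((2*(lam:ℤ)) ∣ (k - (m + lam))) → φ₂ (auxP lam r θ k) < 1 := by
    intro k hk
    have hle : φ₂ (auxP lam r θ k) ≤ 1 := by
      have := hb₂ (auxP lam r θ k); rw [hNP k] at this; exact le_trans (le_abs_self _) this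
    refine lt_of_le_of_ne hle (fun h => hk ?_)
    have h2 := hu₂ _ (hNP k) h
    exact auxP_inj lam hlam r θ hr k (m + lam) (h2.trans hx2m)
  have hsn : 0 < Real.sin (π/(lam:ℝ)) :=
    Real.sin_pos_of_pos_of_lt_pi hspos (by nlinarith [Real.pi_pos])
  -- bound on |φ₁ p2|
  have hnd1 : ¬((2*(lam:ℤ)) ∣ ((m+1) - m)) := by
    intro h
    rw [show (m+1) - m = 1 by ring] at h
    have := Int.le_of_dvd one_pos h; omega
  have hnd1' : ¬((2*(lam:ℤ)) ∣ ((m+(-1)) - m)) := by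
    intro h
    rw [show (m+(-1)) - m = -1 by ring, dvd_neg] at h
    have := Int.le_of_dvd one_pos h; omega
  have he1 : Real.cos (π/(lam:ℝ)) + Real.sin (π/(lam:ℝ)) * φ₁ p2 < 1 := by
    have hlt := hlt1 (m+1) hnd1
    rw [hval φ₁ 1, hA1] at hlt
    push_cast at hlt
    rw [one_mul, mul_one] at hlt
    exact hlt
  have he1' : Real.cos (π/(lam:ℝ)) - Real.sin (π/(lam:ℝ)) * φ₁ p2 < 1 := by
    have hlt := hlt1 (m+(-1)) hnd1'
    rw [hval φ₁ (-1), hA1] at hlt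
    push_cast at hlt
    rw [neg_one_mul, Real.cos_neg, Real.sin_neg, mul_one, neg_mul] at hlt
    linarith
  have hB1 : |φ₁ p2| * Real.sin (π/(lam:ℝ)) < 1 - Real.cos (π/(lam:ℝ)) := by
    rcases abs_cases (φ₁ p2) with ⟨h, -⟩ | ⟨h, -⟩ <;> rw [h] <;> linarith
  -- bound on |φ₂ p2|
  have hnd2 : ¬((2*(lam:ℤ)) ∣ ((m+((lam:ℤ)+1)) - (m + lam))) := by
    intro h
    rw [show (m+((lam:ℤ)+1)) - (m + lam) = 1 by ring] at h
    have := Int.le_of_dvd one_pos h; omega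
  have hnd2' : ¬((2*(lam:ℤ)) ∣ ((m+((lam:ℤ)-1)) - (m + lam))) := by
    intro h
    rw [show (m+((lam:ℤ)-1)) - (m + lam) = -1 by ring, dvd_neg] at h
    have := Int.le_of_dvd one_pos h; omega
  have he2 : Real.cos (π/(lam:ℝ)) - Real.sin (π/(lam:ℝ)) * φ₂ p2 < 1 := by
    have hlt := hlt2 (m+((lam:ℤ)+1)) hnd2
    rw [hval φ₂ ((lam:ℤ)+1), hA2] at hlt
    push_cast at hlt
    rw [show ((lam:ℝ)+1) * (π/(lam:ℝ)) = π/(lam:ℝ) + π by field_simp; ring,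
      Real.cos_add_pi, Real.sin_add_pi] at hlt
    linarith
  have he2' : Real.cos (π/(lam:ℝ)) + Real.sin (π/(lam:ℝ)) * φ₂ p2 < 1 := by
    have hlt := hlt2 (m+((lam:ℤ)-1)) hnd2'
    rw [hval φ₂ ((lam:ℤ)-1), hA2] at hlt
    push_cast at hlt
    rw [show ((lam:ℝ)-1) * (π/(lam:ℝ)) = π - π/(lam:ℝ) by field_simp,
      Real.cos_pi_sub, Real.sin_pi_sub] at hlt
    linarith
  have hB2 : |φ₂ p2| * Real.sin (π/(lam:ℝ)) < 1 - Real.cos (π/(lam:ℝ)) := by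
    rcases abs_cases (φ₂ p2) with ⟨h, -⟩ | ⟨h, -⟩ <;> rw [h] <;> linarith
  have hB3abs : |φ₃ p2| * Real.sin (π/(lam:ℝ)) < 2*(1 - Real.cos (π/(lam:ℝ))) := by
    have h1 : |φ₃ p2| ≤ |φ₁ p2| + |φ₂ p2| := by
      rw [hB3, abs_neg]; exact abs_add_le _ _
    have h2 := mul_le_mul_of_nonneg_right h1 hsn.le
    linarith
  -- φ₃ values at vertices
  have hsin : ∀ k : ℤ, φ₃ (auxP lam r θ k)
      = Real.sin (((k - m : ℤ):ℝ) * (π/lam)) * φ₃ p2 := by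
    intro k
    have h := hval φ₃ (k - m)
    rw [show m + (k - m) = k by ring] at h
    rw [h, hA3, mul_zero, zero_add]
  have hej : Real.sin (((j - m : ℤ):ℝ) * (π/lam)) * φ₃ p2 = 1 := by rw [← hsin j]; exact hφj
  have hej' : Real.sin (((j' - m : ℤ):ℝ) * (π/lam)) * φ₃ p2 = 1 := by rw [← hsin j']; exact hφj'
  -- final case analysis
  rcases lt_or_ge lam 4 with h4 | h4
  · interval_cases lam
    · -- lam = 2
      have hc2 : ((2:ℕ):ℝ) = 2 := by norm_num
      rw [hc2] at hej hej'
      have hndvd4 : ¬ ((4:ℤ) ∣ (j - j')) := by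
        rw [show (4:ℤ) = 2*((2:ℕ):ℤ) by norm_num]; exact hndvd
      rcases aux_sin2_vals (j - m) with ⟨hmod, hsv⟩ | ⟨hmod, hsv⟩ | hsv <;>
        rcases aux_sin2_vals (j' - m) with ⟨hmod', hsv'⟩ | ⟨hmod', hsv'⟩ | hsv' <;>
          rw [hsv] at hej <;> rw [hsv'] at hej'
      · exact hndvd4 (by omega)
      · linarith
      · norm_num at hej'
      · linarith
      · exact hndvd4 (by omega)
      · norm_num at hej'
      · norm_num at hej
      · norm_num at hej
      · norm_num at hej
    · -- lam = 3
      have hc3 : ((3:ℕ):ℝ) = 3 := by norm_num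
      rw [hc3] at hej hB3abs
      rw [show π/(3:ℝ) = π/3 by norm_num] at hej hB3abs
      rw [Real.cos_pi_div_three, Real.sin_pi_div_three] at hB3abs
      have habs := congrArg abs hej
      rw [abs_mul, abs_one] at habs
      have hbd := aux_sin3_bound (j - m)
      have h5 := mul_le_mul_of_nonneg_right hbd (abs_nonneg (φ₃ p2))
      linarith
  · -- lam ≥ 4
    have hlamR4 : (4:ℝ) ≤ (lam:ℝ) := by exact_mod_cast h4
    have hs4 : π/(lam:ℝ) ≤ π/4 := by
      rw [div_le_div_iff₀ hlamR0 (by norm_num)]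
      nlinarith [Real.pi_pos]
    have hkey := aux_key_ineq (π/(lam:ℝ)) hspos hs4
    have habs := congrArg abs hej
    rw [abs_mul, abs_one] at habs
    have habs1 : (1:ℝ) ≤ |φ₃ p2| := by
      have hsle : |Real.sin (((j - m : ℤ):ℝ) * (π/lam))| ≤ 1 := abs_le.mpr
        ⟨Real.neg_one_le_sin _, Real.sin_le_one _⟩
      have h5 := mul_le_mul_of_nonneg_right hsle (abs_nonneg (φ₃ p2))
      rw [one_mul] at h5
      linarith
    have h6 := mul_le_mul_of_nonneg_right habs1 hsn.le
    rw [one_mul] at h6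
    linarith
end
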